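/- arXiv:2602.19748 — 9 statements merged into one kernel-verified Lean document; each statement's English description precedes it below -/
import Mathlib

section
/- Fix Φ ∈ (0, π) and for x, y > 0 define the Euclidean inner angle θ(x, y) = arccos((x + y cos Φ)/√(x² + y² + 2 x y cos Φ)). Then for each fixed y > 0 the function x ↦ θ(x, y) is strictly decreasing on (0, ∞), and for each fixed x > 0 the function y ↦ θ(x, y) is strictly increasing on (0, ∞). -/
/-- The Euclidean inner angle at the vertex of radius `x` in the two-circle configuration
with radii `x, y` and exterior intersection angle `Φ`. -/
noncomputable def thetaE (Φ x y : ℝ) : ℝ :=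
  Real.arccos ((x + y * Real.cos Φ) / Real.sqrt (x ^ 2 + y ^ 2 + 2 * x * y * Real.cos Φ))

lemma div_sqrt_eq_sin_arctan {a b : ℝ} (hb : 0 < b) :
    a / Real.sqrt (a ^ 2 + b ^ 2) = Real.sin (Real.arctan (a / b)) := by
  rw [Real.sin_arctan]
  have h1 : (1 + (a / b) ^ 2) = (a ^ 2 + b ^ 2) / b ^ 2 := by
    field_simp; ring
  have h2 : Real.sqrt (1 + (a / b) ^ 2) = Real.sqrt (a ^ 2 + b ^ 2) / b := by
    rw [h1, Real.sqrt_div (by positivity), Real.sqrt_sq hb.le]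
  rw [h2]
  have hs : 0 < Real.sqrt (a ^ 2 + b ^ 2) := Real.sqrt_pos.2 (by positivity)
  field_simp

lemma thetaE_eq (Φ x y : ℝ) (hy : 0 < y) (hs : 0 < Real.sin Φ) :
    thetaE Φ x y = Real.arccos (Real.sin (Real.arctan
      ((x + y * Real.cos Φ) / (y * Real.sin Φ)))) := by
  unfold thetaE
  have hb : 0 < y * Real.sin Φ := mul_pos hy hs
  have key : x ^ 2 + y ^ 2 + 2 * x * y * Real.cos Φ
      = (x + y * Real.cos Φ) ^ 2 + (y * Real.sin Φ) ^ 2 := by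
    have := Real.sin_sq_add_cos_sq Φ
    nlinarith [this]
  rw [key, div_sqrt_eq_sin_arctan hb]

lemma arccos_sin_arctan_strictAnti : StrictAnti
    (fun t : ℝ => Real.arccos (Real.sin (Real.arctan t))) := by
  intro t₁ t₂ h
  have h1 : Real.arctan t₁ < Real.arctan t₂ := Real.arctan_strictMono h
  have m1 := Real.arctan_mem_Ioo t₁
  have m2 := Real.arctan_mem_Ioo t₂
  have hsin : Real.sin (Real.arctan t₁) < Real.sin (Real.arctan t₂) :=
    Real.strictMonoOn_sin ⟨m1.1.le, m1.2.le⟩ ⟨m2.1.le, m2.2.le⟩ h1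
  exact Real.strictAntiOn_arccos ⟨Real.neg_one_le_sin _, Real.sin_le_one _⟩
    ⟨Real.neg_one_le_sin _, Real.sin_le_one _⟩ hsin

/-- For a fixed weight `Φ ∈ (0, π)`, the Euclidean inner angle `θ(x, y)` is strictly
decreasing in `x` on `(0, ∞)` for each fixed `y > 0`, and strictly increasing in `y` on
`(0, ∞)` for each fixed `x > 0`. -/
theorem euclidean_angle_monotone (Φ : ℝ) (hΦ : Φ ∈ Set.Ioo 0 Real.pi) :
    (∀ y : ℝ, 0 < y → StrictAntiOn (fun x => thetaE Φ x y) (Set.Ioi 0)) ∧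
    (∀ x : ℝ, 0 < x → StrictMonoOn (fun y => thetaE Φ x y) (Set.Ioi 0)) := by
  have hs : 0 < Real.sin Φ := Real.sin_pos_of_pos_of_lt_pi hΦ.1 hΦ.2
  constructor
  · intro y hy x₁ hx₁ x₂ hx₂ hx
    simp only [thetaE_eq Φ _ y hy hs]
    apply arccos_sin_arctan_strictAnti
    have hys : 0 < y * Real.sin Φ := mul_pos hy hs
    gcongr
  · intro x hx y₁ hy₁ y₂ hy₂ hy
    simp only [Set.mem_Ioi] at hy₁ hy₂
    simp only [thetaE_eq Φ x _ hy₁ hs, thetaE_eq Φ x _ hy₂ hs]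
    apply arccos_sin_arctan_strictAnti
    have hsne : Real.sin Φ ≠ 0 := hs.ne'
    have e : ∀ y : ℝ, y ≠ 0 → (x + y * Real.cos Φ) / (y * Real.sin Φ)
        = x / (y * Real.sin Φ) + Real.cos Φ / Real.sin Φ := by
      intro y hy0; field_simp
    rw [e y₁ hy₁.ne', e y₂ hy₂.ne']
    have : x / (y₂ * Real.sin Φ) < x / (y₁ * Real.sin Φ) :=
      div_lt_div_of_pos_left hx (mul_pos hy₁ hs) (by gcongr)
    linarith
end

section
/- Fix Φ ∈ (0, π). For x, y > 0 let l(x, y) = arcosh(cosh x cosh y + sinh x sinh y cos Φ) and let f(x, y) = (cosh l(x,y) · cosh x − cosh y)/(sinh l(x,y) · sinh x) be the cosine (given by the hyperbolic law of cosines) of the inner angle at the vertex of radius x. Then for all x, y > 0 the partial derivative of f with respect to x exists and equals sinh²y · cosh l(x,y) · sin²Φ / sinh³ l(x,y), which is strictly positive. -/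
/-- The inverse of `cosh` on `[1, ∞)`. -/
noncomputable def arcosh (x : ℝ) : ℝ := Real.log (x + Real.sqrt (x ^ 2 - 1))

lemma arcosh_aux {t : ℝ} (ht : 1 ≤ t) :
    Real.cosh (arcosh t) = t ∧ Real.sinh (arcosh t) = Real.sqrt (t ^ 2 - 1) := by
  have hs : Real.sqrt (t ^ 2 - 1) ^ 2 = t ^ 2 - 1 := Real.sq_sqrt (by nlinarith)
  have hsnn : 0 ≤ Real.sqrt (t ^ 2 - 1) := Real.sqrt_nonneg _
  have hpos : 0 < t + Real.sqrt (t ^ 2 - 1) := by linarith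
  have he : Real.exp (arcosh t) = t + Real.sqrt (t ^ 2 - 1) := Real.exp_log hpos
  have hen : Real.exp (-arcosh t) = t - Real.sqrt (t ^ 2 - 1) := by
    rw [Real.exp_neg, he, eq_comm]
    exact eq_inv_of_mul_eq_one_left (by nlinarith)
  constructor
  · rw [Real.cosh_eq, he, hen]; ring
  · rw [Real.sinh_eq, he, hen]; ring

/-- The hyperbolic edge length of the two-circle configuration with radii `x, y` and
exterior intersection angle `Φ`. -/
noncomputable def hypLen (Φ x y : ℝ) : ℝ :=
  arcosh (Real.cosh x * Real.cosh y + Real.sinh x * Real.sinh y * Real.cos Φ)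

/-- The cosine of the hyperbolic inner angle at the vertex of radius `x`, given by the
hyperbolic law of cosines. -/
noncomputable def hypCos (Φ x y : ℝ) : ℝ :=
  (Real.cosh (hypLen Φ x y) * Real.cosh x - Real.cosh y) /
    (Real.sinh (hypLen Φ x y) * Real.sinh x)

/-- For a fixed weight `Φ ∈ (0, π)`, the cosine `f(x, y)` of the hyperbolic inner angle has,
for all `x, y > 0`, partial derivative with respect to `x` equal to
`sinh²y · cosh l(x,y) · sin²Φ / sinh³ l(x,y)`, which is strictly positive. -/
theorem hyperbolic_cos_deriv_fst (Φ : ℝ) (hΦ : Φ ∈ Set.Ioo 0 Real.pi) :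
    ∀ x y : ℝ, 0 < x → 0 < y →
      HasDerivAt (fun s : ℝ => hypCos Φ s y)
        (Real.sinh y ^ 2 * Real.cosh (hypLen Φ x y) * Real.sin Φ ^ 2 /
          Real.sinh (hypLen Φ x y) ^ 3) x ∧
      0 < Real.sinh y ^ 2 * Real.cosh (hypLen Φ x y) * Real.sin Φ ^ 2 /
          Real.sinh (hypLen Φ x y) ^ 3 := by
  intro x y hx hy
  obtain ⟨hΦ0, hΦπ⟩ := hΦ
  have hsin : 0 < Real.sin Φ := Real.sin_pos_of_pos_of_lt_pi hΦ0 hΦπ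
  have hc1 : Real.cos Φ ^ 2 < 1 := by nlinarith [Real.sin_sq_add_cos_sq Φ]
  have hcm : -1 < Real.cos Φ := by nlinarith
  have hQ : 0 < Real.sinh y := Real.sinh_pos_iff.mpr hy
  -- T : the arcosh argument as a function of s
  set T : ℝ → ℝ := fun s =>
    Real.cosh s * Real.cosh y + Real.sinh s * Real.sinh y * Real.cos Φ with hTdef
  have hT1 : ∀ s : ℝ, 0 < s → 1 < T s := by
    intro s hs
    have h1 : 0 < Real.sinh s := Real.sinh_pos_iff.mpr hs
    have h2 : (1:ℝ) ≤ Real.cosh (s - y) := Real.one_le_cosh _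
    rw [Real.cosh_sub] at h2
    simp only [hTdef]
    nlinarith [mul_pos (mul_pos h1 hQ) (by linarith : (0:ℝ) < Real.cos Φ + 1)]
  have hTx := hT1 x hx
  -- cosh / sinh of hypLen
  have hC : ∀ s : ℝ, 0 < s → Real.cosh (hypLen Φ s y) = T s := fun s hs =>
    (arcosh_aux (le_of_lt (hT1 s hs))).1
  have hS : ∀ s : ℝ, 0 < s →
      Real.sinh (hypLen Φ s y) = Real.sqrt (T s ^ 2 - 1) := fun s hs =>
    (arcosh_aux (le_of_lt (hT1 s hs))).2
  -- simplified form of hypCos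
  set u : ℝ → ℝ := fun s =>
    Real.sinh s * Real.cosh y + Real.cosh s * Real.sinh y * Real.cos Φ with hudef
  have hkey : ∀ s : ℝ, 0 < s → hypCos Φ s y = u s / Real.sqrt (T s ^ 2 - 1) := by
    intro s hs
    have hTs := hT1 s hs
    have hsq : Real.sqrt (T s ^ 2 - 1) ^ 2 = T s ^ 2 - 1 :=
      Real.sq_sqrt (by nlinarith)
    have hsqpos : 0 < Real.sqrt (T s ^ 2 - 1) :=
      Real.sqrt_pos.mpr (by nlinarith)
    have hb : 0 < Real.sinh s := Real.sinh_pos_iff.mpr hs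
    have hcs : Real.cosh s ^ 2 = Real.sinh s ^ 2 + 1 := Real.cosh_sq s
    have hnum : T s * Real.cosh s - Real.cosh y = Real.sinh s * u s := by
      simp only [hTdef, hudef]
      linear_combination Real.cosh y * hcs
    rw [hypCos, hC s hs, hS s hs, hnum]
    rw [div_eq_div_iff (by positivity) (by positivity)]
    ring
  -- derivative of u and T
  have hu' : HasDerivAt u (T x) x := by
    have h := ((Real.hasDerivAt_sinh x).mul_const (Real.cosh y)).add
      (((Real.hasDerivAt_cosh x).mul_const (Real.sinh y)).mul_const (Real.cos Φ))
    simp only [hudef, hTdef]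
    exact h
  have hT' : HasDerivAt T (u x) x := by
    have h := ((Real.hasDerivAt_cosh x).mul_const (Real.cosh y)).add
      (((Real.hasDerivAt_sinh x).mul_const (Real.sinh y)).mul_const (Real.cos Φ))
    simp only [hudef, hTdef]
    exact h
  have hw' : HasDerivAt (fun s => T s ^ 2 - 1) (2 * T x * u x) x := by
    have h := (hT'.pow 2).sub_const 1
    simpa [mul_comm, mul_assoc, mul_left_comm] using h
  have hwpos : 0 < T x ^ 2 - 1 := by nlinarith
  have hsqx : Real.sqrt (T x ^ 2 - 1) ^ 2 = T x ^ 2 - 1 := Real.sq_sqrt (le_of_lt hwpos)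
  have hsqxpos : 0 < Real.sqrt (T x ^ 2 - 1) := Real.sqrt_pos.mpr hwpos
  have hv' : HasDerivAt (fun s => Real.sqrt (T s ^ 2 - 1))
      (2 * T x * u x / (2 * Real.sqrt (T x ^ 2 - 1))) x :=
    hw'.sqrt (ne_of_gt hwpos)
  have hg : HasDerivAt (fun s => u s / Real.sqrt (T s ^ 2 - 1))
      ((T x * Real.sqrt (T x ^ 2 - 1) -
        u x * (2 * T x * u x / (2 * Real.sqrt (T x ^ 2 - 1)))) /
        Real.sqrt (T x ^ 2 - 1) ^ 2) x :=
    hu'.div hv' (ne_of_gt hsqxpos)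
  -- the derivative value equals the target
  have hval : (T x * Real.sqrt (T x ^ 2 - 1) -
        u x * (2 * T x * u x / (2 * Real.sqrt (T x ^ 2 - 1)))) /
        Real.sqrt (T x ^ 2 - 1) ^ 2 =
      Real.sinh y ^ 2 * Real.cosh (hypLen Φ x y) * Real.sin Φ ^ 2 /
        Real.sinh (hypLen Φ x y) ^ 3 := by
    rw [hC x hx, hS x hx]
    have hid : T x ^ 2 - 1 - u x ^ 2 = Real.sinh y ^ 2 * Real.sin Φ ^ 2 := by
      simp only [hTdef, hudef]
      have h1 : Real.cosh x ^ 2 = Real.sinh x ^ 2 + 1 := Real.cosh_sq x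
      have h2 : Real.cosh y ^ 2 = Real.sinh y ^ 2 + 1 := Real.cosh_sq y
      have h3 : Real.sin Φ ^ 2 + Real.cos Φ ^ 2 = 1 := Real.sin_sq_add_cos_sq Φ
      linear_combination (Real.cosh y ^ 2 - Real.sinh y ^ 2 * Real.cos Φ ^ 2) * h1 + h2 -
        Real.sinh y ^ 2 * h3
    have hS0 : Real.sqrt (T x ^ 2 - 1) ≠ 0 := hsqxpos.ne'
    have e : T x * Real.sqrt (T x ^ 2 - 1) - u x * (2 * T x * u x / (2 * Real.sqrt (T x ^ 2 - 1))) =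
        T x * (Real.sqrt (T x ^ 2 - 1) ^ 2 - u x ^ 2) / Real.sqrt (T x ^ 2 - 1) := by
      field_simp
    rw [e, show T x * (Real.sqrt (T x ^ 2 - 1) ^ 2 - u x ^ 2) =
        T x * (Real.sinh y ^ 2 * Real.sin Φ ^ 2) by rw [hsqx, hid]]
    field_simp
  constructor
  · refine HasDerivAt.congr_of_eventuallyEq (hval ▸ hg) ?_
    filter_upwards [Ioi_mem_nhds hx] with s hs
    exact hkey s hs
  · rw [hS x hx, hC x hx]
    positivity
end

section
/- Fix Φ ∈ (0, π). For x, y > 0 let l(x, y) = arcosh(cosh x cosh y + sinh x sinh y cos Φ) and let f(x, y) = (cosh l(x,y) · cosh x − cosh y)/(sinh l(x,y) · sinh x). Then for all x, y > 0 the partial derivative of f with respect to y exists and equals −sinh x · sinh y · sin²Φ / sinh³ l(x,y), which is strictly negative. -/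
lemma cosh_arcosh {t : ℝ} (ht : 1 < t) : Real.cosh (arcosh t) = t := by
  have h1 : (0:ℝ) ≤ t ^ 2 - 1 := by nlinarith
  have hs : Real.sqrt (t ^ 2 - 1) ^ 2 = t ^ 2 - 1 := Real.sq_sqrt h1
  have hs0 : 0 ≤ Real.sqrt (t ^ 2 - 1) := Real.sqrt_nonneg _
  have hpos : 0 < t + Real.sqrt (t ^ 2 - 1) := by linarith
  rw [arcosh, Real.cosh_eq, Real.exp_log hpos, Real.exp_neg, Real.exp_log hpos]
  field_simp
  nlinarith [hs]

lemma sinh_arcosh {t : ℝ} (ht : 1 < t) : Real.sinh (arcosh t) = Real.sqrt (t ^ 2 - 1) := by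
  have h1 : (0:ℝ) ≤ t ^ 2 - 1 := by nlinarith
  have hs : Real.sqrt (t ^ 2 - 1) ^ 2 = t ^ 2 - 1 := Real.sq_sqrt h1
  have hs0 : 0 ≤ Real.sqrt (t ^ 2 - 1) := Real.sqrt_nonneg _
  have hpos : 0 < t + Real.sqrt (t ^ 2 - 1) := by linarith
  rw [arcosh, Real.sinh_eq, Real.exp_neg, Real.exp_log hpos]
  field_simp
  nlinarith [hs]

/-- For a fixed weight `Φ ∈ (0, π)`, the cosine `f(x, y)` of the hyperbolic inner angle has,
for all `x, y > 0`, partial derivative with respect to `y` equal to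
`−sinh x · sinh y · sin²Φ / sinh³ l(x,y)`, which is strictly negative. -/
theorem hyperbolic_cos_deriv_snd (Φ : ℝ) (hΦ : Φ ∈ Set.Ioo 0 Real.pi) :
    ∀ x y : ℝ, 0 < x → 0 < y →
      HasDerivAt (fun s : ℝ => hypCos Φ x s)
        (-(Real.sinh x * Real.sinh y * Real.sin Φ ^ 2) / Real.sinh (hypLen Φ x y) ^ 3) y ∧
      -(Real.sinh x * Real.sinh y * Real.sin Φ ^ 2) / Real.sinh (hypLen Φ x y) ^ 3 < 0 := by
  intro x y hx hy
  obtain ⟨hΦ0, hΦπ⟩ := hΦ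
  have hsinΦ : 0 < Real.sin Φ := Real.sin_pos_of_pos_of_lt_pi hΦ0 hΦπ
  have hcosΦ : -1 < Real.cos Φ := by
    nlinarith [Real.sin_sq_add_cos_sq Φ, Real.neg_one_le_cos Φ]
  set A := Real.cosh x with hA
  set B := Real.sinh x with hB
  have hBpos : 0 < B := Real.sinh_pos_iff.mpr hx
  set c : ℝ → ℝ := fun s => A * Real.cosh s + B * Real.sinh s * Real.cos Φ with hcdef
  -- c s > 1 for s > 0
  have hcgt : ∀ s : ℝ, 0 < s → 1 < c s := by
    intro s hs
    have h1 : Real.cosh (x - s) = A * Real.cosh s - B * Real.sinh s := by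
      rw [Real.cosh_sub]
    have h2 : (1:ℝ) ≤ Real.cosh (x - s) := Real.one_le_cosh _
    have h3 : 0 < Real.sinh s := Real.sinh_pos_iff.mpr hs
    have : c s = A * Real.cosh s + B * Real.sinh s * Real.cos Φ := rfl
    nlinarith [mul_pos hBpos h3]
  have hcy : 1 < c y := hcgt y hy
  -- derivatives
  have hc' : HasDerivAt c (A * Real.sinh y + B * Real.cosh y * Real.cos Φ) y := by
    exact ((Real.hasDerivAt_cosh y).const_mul A).add
      (((Real.hasDerivAt_sinh y).const_mul B).mul_const (Real.cos Φ))
  set c' := A * Real.sinh y + B * Real.cosh y * Real.cos Φ with hc'def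
  have hsq : HasDerivAt (fun s => c s ^ 2 - 1) (2 * c y ^ 1 * c') y :=
    (hc'.pow 2).sub_const 1
  have hne : c y ^ 2 - 1 ≠ 0 := by nlinarith
  have hsqrt : HasDerivAt (fun s => Real.sqrt (c s ^ 2 - 1))
      ((2 * c y ^ 1 * c') / (2 * Real.sqrt (c y ^ 2 - 1))) y := hsq.sqrt hne
  set S := Real.sqrt (c y ^ 2 - 1) with hSdef
  have hS2 : S ^ 2 = c y ^ 2 - 1 := Real.sq_sqrt (by nlinarith)
  have hSpos : 0 < S := Real.sqrt_pos.mpr (by nlinarith)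
  -- numerator and denominator derivatives
  have hnum : HasDerivAt (fun s => c s * A - Real.cosh s) (c' * A - Real.sinh y) y :=
    (hc'.mul_const A).sub (Real.hasDerivAt_cosh y)
  have hden : HasDerivAt (fun s => Real.sqrt (c s ^ 2 - 1) * B)
      ((2 * c y ^ 1 * c') / (2 * S) * B) y := hsqrt.mul_const B
  have hdenne : S * B ≠ 0 := by positivity
  have hg : HasDerivAt (fun s => (c s * A - Real.cosh s) / (Real.sqrt (c s ^ 2 - 1) * B))
      (((c' * A - Real.sinh y) * (S * B) -
        (c y * A - Real.cosh y) * ((2 * c y ^ 1 * c') / (2 * S) * B)) / (S * B) ^ 2) y :=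
    hnum.div hden hdenne
  -- hypCos equals this function near y
  have heq : (fun s : ℝ => hypCos Φ x s) =ᶠ[nhds y]
      (fun s => (c s * A - Real.cosh s) / (Real.sqrt (c s ^ 2 - 1) * B)) := by
    filter_upwards [Ioi_mem_nhds hy] with s hs
    have h1 : 1 < c s := hcgt s hs
    simp only [hypCos, hypLen]
    rw [cosh_arcosh h1, sinh_arcosh h1]
  have hsinhl : Real.sinh (hypLen Φ x y) = S := by
    rw [hypLen, sinh_arcosh hcy]
  -- the key algebraic identity
  have hA2 : A ^ 2 = B ^ 2 + 1 := by
    rw [hA, hB]; nlinarith [Real.cosh_sq_sub_sinh_sq x]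
  have hp2 : Real.cosh y ^ 2 = Real.sinh y ^ 2 + 1 := by
    nlinarith [Real.cosh_sq_sub_sinh_sq y]
  have hk2 : Real.sin Φ ^ 2 = 1 - Real.cos Φ ^ 2 := by
    nlinarith [Real.sin_sq_add_cos_sq Φ]
  have key2 : (c' * A - Real.sinh y) * (c y ^ 2 - 1) -
      (c y * A - Real.cosh y) * (c y * c') = -(B ^ 2 * Real.sinh y * Real.sin Φ ^ 2) := by
    have hcc : c y = A * Real.cosh y + B * Real.sinh y * Real.cos Φ := rfl
    rw [hcc, hc'def]
    linear_combination (-(Real.sinh y)) * hA2 +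
      (B ^ 2 * Real.sinh y * Real.cos Φ ^ 2 + A * B * Real.cosh y * Real.cos Φ) * hp2 +
      (B ^ 2 * Real.sinh y) * hk2
  have hkey : ((c' * A - Real.sinh y) * (S * B) -
        (c y * A - Real.cosh y) * ((2 * c y ^ 1 * c') / (2 * S) * B)) / (S * B) ^ 2 =
      -(B * Real.sinh y * Real.sin Φ ^ 2) / S ^ 3 := by
    have e1 : ((c' * A - Real.sinh y) * (S * B) -
        (c y * A - Real.cosh y) * ((2 * c y ^ 1 * c') / (2 * S) * B)) / (S * B) ^ 2 =
        ((c' * A - Real.sinh y) * S ^ 2 - (c y * A - Real.cosh y) * (c y * c')) /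
          (S ^ 3 * B) := by
      field_simp
    rw [e1, hS2, key2]
    field_simp
  constructor
  · rw [hsinhl]
    refine HasDerivAt.congr_of_eventuallyEq ?_ heq
    rw [← hkey]
    exact hg
  · rw [hsinhl]
    have hq : 0 < Real.sinh y := Real.sinh_pos_iff.mpr hy
    have hp' : 0 < Real.sinh x * Real.sinh y * Real.sin Φ ^ 2 := by positivity
    exact div_neg_of_neg_of_pos (by linarith) (pow_pos hSpos 3)
end

section
/- Fix Φ ∈ (0, π) and for x, y > 0 define the hyperbolic inner angle θ(x, y) = arccos((cosh l(x,y) · cosh x − cosh y)/(sinh l(x,y) · sinh x)), where l(x, y) = arcosh(cosh x cosh y + sinh x sinh y cos Φ). Then for each fixed y > 0 the function x ↦ θ(x, y) is strictly decreasing on (0, ∞), and for each fixed x > 0 the function y ↦ θ(x, y) is strictly increasing on (0, ∞). -/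
/-- The hyperbolic inner angle at the vertex of radius `x` in the two-circle configuration
with radii `x, y` and exterior intersection angle `Φ`. -/
noncomputable def thetaH (Φ x y : ℝ) : ℝ :=
  Real.arccos ((Real.cosh (hypLen Φ x y) * Real.cosh x - Real.cosh y) /
    (Real.sinh (hypLen Φ x y) * Real.sinh x))

lemma cosh_arcosh_aux (t : ℝ) (ht : 1 ≤ t) :
    Real.cosh (arcosh t) = t ∧ Real.sinh (arcosh t) = Real.sqrt (t ^ 2 - 1) := by
  have h1 : (0:ℝ) ≤ t ^ 2 - 1 := by nlinarith
  have hsq : Real.sqrt (t ^ 2 - 1) ^ 2 = t ^ 2 - 1 := Real.sq_sqrt h1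
  have hu : (0:ℝ) < t + Real.sqrt (t ^ 2 - 1) := by
    have := Real.sqrt_nonneg (t ^ 2 - 1); linarith
  have hinv : (t + Real.sqrt (t ^ 2 - 1))⁻¹ = t - Real.sqrt (t ^ 2 - 1) := by
    rw [inv_eq_iff_eq_inv, eq_comm, inv_eq_iff_eq_inv]
    field_simp
    nlinarith [hsq]
  constructor
  · rw [arcosh, Real.cosh_eq, Real.exp_neg, Real.exp_log hu, hinv]
    ring
  · rw [arcosh, Real.sinh_eq, Real.exp_neg, Real.exp_log hu, hinv]
    ring

/-- The auxiliary function `r ↦ r / √(r² + k)`. -/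
noncomputable def gg (k r : ℝ) : ℝ := r / Real.sqrt (r ^ 2 + k)

lemma gg_abs_lt (k : ℝ) (hk : 0 < k) (r : ℝ) : |gg k r| < 1 := by
  have hpos : 0 < Real.sqrt (r ^ 2 + k) := Real.sqrt_pos.2 (by positivity)
  have habs : |r| < Real.sqrt (r ^ 2 + k) := by
    calc |r| = Real.sqrt (r ^ 2) := (Real.sqrt_sq_eq_abs r).symm
    _ < Real.sqrt (r ^ 2 + k) := Real.sqrt_lt_sqrt (sq_nonneg r) (by linarith)
  rw [gg, abs_div, abs_of_pos hpos, div_lt_one hpos]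
  exact habs

lemma gg_mem (k : ℝ) (hk : 0 < k) (r : ℝ) : gg k r ∈ Set.Icc (-1 : ℝ) 1 := by
  have := abs_lt.1 (gg_abs_lt k hk r)
  exact ⟨le_of_lt this.1, le_of_lt this.2⟩

lemma gg_strictMono (k : ℝ) (hk : 0 < k) : StrictMono (gg k) := by
  intro a b hab
  have hpa : 0 < Real.sqrt (a ^ 2 + k) := Real.sqrt_pos.2 (by positivity)
  have hpb : 0 < Real.sqrt (b ^ 2 + k) := Real.sqrt_pos.2 (by positivity)
  rw [gg, gg, div_lt_div_iff₀ hpa hpb]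
  have key : ∀ u v : ℝ, 0 ≤ u → u < v →
      u * Real.sqrt (v ^ 2 + k) < v * Real.sqrt (u ^ 2 + k) := by
    intro u v hu huv
    have h1 : u * Real.sqrt (v ^ 2 + k) = Real.sqrt (u ^ 2 * (v ^ 2 + k)) := by
      rw [Real.sqrt_mul (sq_nonneg u), Real.sqrt_sq hu]
    have h2 : v * Real.sqrt (u ^ 2 + k) = Real.sqrt (v ^ 2 * (u ^ 2 + k)) := by
      rw [Real.sqrt_mul (sq_nonneg v), Real.sqrt_sq (by linarith)]
    rw [h1, h2]
    apply Real.sqrt_lt_sqrt (by positivity)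
    nlinarith [mul_pos hk (show (0:ℝ) < v ^ 2 - u ^ 2 by nlinarith)]
  rcases le_or_gt 0 a with ha | ha
  · exact key a b ha hab
  · rcases lt_or_ge 0 b with hb | hb
    · have h1 : a * Real.sqrt (b ^ 2 + k) < 0 := mul_neg_of_neg_of_pos ha hpb
      have h2 : 0 < b * Real.sqrt (a ^ 2 + k) := mul_pos hb hpa
      linarith
    · have := key (-b) (-a) (by linarith) (by linarith)
      have e1 : ((-b) : ℝ) ^ 2 = b ^ 2 := by ring
      have e2 : ((-a) : ℝ) ^ 2 = a ^ 2 := by ring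
      rw [e1, e2] at this
      nlinarith

/-- The abstract algebraic core of the rewriting of `thetaH`. -/
lemma arccos_aux (c s u S U : ℝ) (hs : 0 < s) (hS : 0 < S)
    (hc : -1 < c) (hc1 : c < 1) (hu : 1 ≤ u) (hU : 1 ≤ U)
    (hus : u ^ 2 - s ^ 2 = 1) (hUS : U ^ 2 - S ^ 2 = 1) :
    Real.arccos ((Real.cosh (arcosh (u * U + s * S * c)) * u - U) /
        (Real.sinh (arcosh (u * U + s * S * c)) * s))
      = Real.arccos (gg (1 - c ^ 2) ((s * U + c * u * S) / S)) := by
  have hk0 : (0:ℝ) < 1 - c ^ 2 := by nlinarith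
  have hC1 : 1 < u * U + s * S * c := by
    nlinarith [sq_nonneg (s - S), sq_nonneg (u * U - s * S - 1),
      mul_pos hs hS, mul_pos (mul_pos hs hS) (show (0:ℝ) < 1 + c by linarith),
      mul_pos (show (0:ℝ) < u by linarith) (show (0:ℝ) < U by linarith)]
  obtain ⟨hch, hsh⟩ := cosh_arcosh_aux (u * U + s * S * c) (le_of_lt hC1)
  have hC2 : (u * U + s * S * c) ^ 2 - 1
      = (s * U + c * u * S) ^ 2 + (1 - c ^ 2) * S ^ 2 := by
    linear_combination (U ^ 2 - c ^ 2 * S ^ 2) * hus + hUS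
  have hnum : (u * U + s * S * c) * u - U = s * (s * U + c * u * S) := by
    linear_combination U * hus
  have hpos : 0 < Real.sqrt ((s * U + c * u * S) ^ 2 + (1 - c ^ 2) * S ^ 2) :=
    Real.sqrt_pos.2 (by positivity)
  have hsqrt : Real.sqrt ((s * U + c * u * S) ^ 2 + (1 - c ^ 2) * S ^ 2)
      = S * Real.sqrt (((s * U + c * u * S) / S) ^ 2 + (1 - c ^ 2)) := by
    rw [show (s * U + c * u * S) ^ 2 + (1 - c ^ 2) * S ^ 2
        = S ^ 2 * (((s * U + c * u * S) / S) ^ 2 + (1 - c ^ 2)) by field_simp,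
      Real.sqrt_mul (sq_nonneg S), Real.sqrt_sq (le_of_lt hS)]
  rw [hch, hsh, hC2, hnum, gg, hsqrt]
  congr 1
  rw [div_div]
  rw [div_eq_div_iff (by positivity) (by positivity)]
  ring

lemma thetaH_eq (Φ x y : ℝ) (hx : 0 < x) (hy : 0 < y)
    (hc : -1 < Real.cos Φ) (hc1 : Real.cos Φ < 1) :
    thetaH Φ x y = Real.arccos (gg (1 - Real.cos Φ ^ 2)
      ((Real.sinh x * Real.cosh y + Real.cos Φ * Real.cosh x * Real.sinh y) / Real.sinh y)) := by
  have := arccos_aux (Real.cos Φ) (Real.sinh x) (Real.cosh x) (Real.sinh y) (Real.cosh y)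
    (Real.sinh_pos_iff.2 hx) (Real.sinh_pos_iff.2 hy) hc hc1
    (Real.one_le_cosh x) (Real.one_le_cosh y)
    (by rw [Real.cosh_sq]; ring) (by rw [Real.cosh_sq]; ring)
  simpa only [thetaH, hypLen] using this

/-- For a fixed weight `Φ ∈ (0, π)`, the hyperbolic inner angle `θ(x, y)` is strictly
decreasing in `x` on `(0, ∞)` for each fixed `y > 0`, and strictly increasing in `y` on
`(0, ∞)` for each fixed `x > 0`. -/
theorem hyperbolic_angle_monotone (Φ : ℝ) (hΦ : Φ ∈ Set.Ioo 0 Real.pi) :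
    (∀ y : ℝ, 0 < y → StrictAntiOn (fun x => thetaH Φ x y) (Set.Ioi 0)) ∧
    (∀ x : ℝ, 0 < x → StrictMonoOn (fun y => thetaH Φ x y) (Set.Ioi 0)) := by
  obtain ⟨hΦ0, hΦπ⟩ := hΦ
  have hsin : 0 < Real.sin Φ := Real.sin_pos_of_pos_of_lt_pi hΦ0 hΦπ
  have habs : |Real.cos Φ| < 1 := by
    nlinarith [Real.sin_sq_add_cos_sq Φ, abs_nonneg (Real.cos Φ), sq_abs (Real.cos Φ)]
  obtain ⟨hc, hc1⟩ := abs_lt.1 habs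
  have hk0 : (0:ℝ) < 1 - Real.cos Φ ^ 2 := by nlinarith
  have harccos : ∀ r₁ r₂ : ℝ, r₁ < r₂ →
      Real.arccos (gg (1 - Real.cos Φ ^ 2) r₂) < Real.arccos (gg (1 - Real.cos Φ ^ 2) r₁) :=
    fun r₁ r₂ h => Real.strictAntiOn_arccos (gg_mem _ hk0 r₁) (gg_mem _ hk0 r₂)
      (gg_strictMono _ hk0 h)
  constructor
  · intro y hy x₁ hx₁ x₂ hx₂ h12
    simp only [Set.mem_Ioi] at hx₁ hx₂ hy
    show thetaH Φ x₂ y < thetaH Φ x₁ y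
    rw [thetaH_eq Φ x₁ y hx₁ hy hc hc1, thetaH_eq Φ x₂ y hx₂ hy hc hc1]
    apply harccos
    have hS : 0 < Real.sinh y := Real.sinh_pos_iff.2 hy
    rw [div_lt_div_iff₀ hS hS]
    have hN : ∀ x : ℝ, Real.sinh x * Real.cosh y + Real.cos Φ * Real.cosh x * Real.sinh y
        = Real.sinh (x - y) + (1 + Real.cos Φ) * (Real.cosh x * Real.sinh y) := by
      intro x; rw [Real.sinh_sub]; ring
    rw [hN x₁, hN x₂]
    have h1 : Real.sinh (x₁ - y) < Real.sinh (x₂ - y) :=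
      Real.sinh_strictMono (by linarith)
    have h2 : Real.cosh x₁ < Real.cosh x₂ := by
      rw [Real.cosh_lt_cosh, abs_of_pos hx₁, abs_of_pos hx₂]; exact h12
    have h3 : (1 + Real.cos Φ) * (Real.cosh x₁ * Real.sinh y)
        < (1 + Real.cos Φ) * (Real.cosh x₂ * Real.sinh y) := by
      apply mul_lt_mul_of_pos_left _ (by linarith)
      exact mul_lt_mul_of_pos_right h2 hS
    nlinarith [hS]
  · intro x hx y₁ hy₁ y₂ hy₂ h12
    simp only [Set.mem_Ioi] at hy₁ hy₂ hx
    show thetaH Φ x y₁ < thetaH Φ x y₂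
    rw [thetaH_eq Φ x y₁ hx hy₁ hc hc1, thetaH_eq Φ x y₂ hx hy₂ hc hc1]
    apply harccos
    have hS₁ : 0 < Real.sinh y₁ := Real.sinh_pos_iff.2 hy₁
    have hS₂ : 0 < Real.sinh y₂ := Real.sinh_pos_iff.2 hy₂
    have hs : 0 < Real.sinh x := Real.sinh_pos_iff.2 hx
    rw [div_lt_div_iff₀ hS₂ hS₁]
    have h1 : 0 < Real.sinh (y₂ - y₁) := Real.sinh_pos_iff.2 (by linarith)
    rw [Real.sinh_sub] at h1
    nlinarith
end

section
/- Fix Φ ∈ (0, π) and define g(t) = θ(t, t) for t > 0, where θ(x, y) = arccos((cosh l(x,y) · cosh x − cosh y)/(sinh l(x,y) · sinh x)) and l(x, y) = arcosh(cosh x cosh y + sinh x sinh y cos Φ). Then g is continuously differentiable and strictly decreasing on (0, ∞). -/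
open Real

lemma cosh_arcosh_s10 {X : ℝ} (hX : 1 ≤ X) : Real.cosh (_root_.arcosh X) = X := by
  have h0 : (0:ℝ) ≤ X ^ 2 - 1 := by nlinarith
  have hs : Real.sqrt (X ^ 2 - 1) ^ 2 = X ^ 2 - 1 := Real.sq_sqrt h0
  have hs0 : 0 ≤ Real.sqrt (X ^ 2 - 1) := Real.sqrt_nonneg _
  have hy : 0 < X + Real.sqrt (X ^ 2 - 1) := by nlinarith
  rw [_root_.arcosh, Real.cosh_eq, Real.exp_log hy, Real.exp_neg, Real.exp_log hy]
  field_simp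
  nlinarith [hs]

lemma sinh_arcosh_s10 {X : ℝ} (hX : 1 ≤ X) :
    Real.sinh (_root_.arcosh X) = Real.sqrt (X ^ 2 - 1) := by
  have h0 : (0:ℝ) ≤ X ^ 2 - 1 := by nlinarith
  have hs : Real.sqrt (X ^ 2 - 1) ^ 2 = X ^ 2 - 1 := Real.sq_sqrt h0
  have hs0 : 0 ≤ Real.sqrt (X ^ 2 - 1) := Real.sqrt_nonneg _
  have hy : 0 < X + Real.sqrt (X ^ 2 - 1) := by nlinarith
  rw [_root_.arcosh, Real.sinh_eq, Real.exp_log hy, Real.exp_neg, Real.exp_log hy]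
  field_simp
  nlinarith [hs]

lemma theta_diag_eq (Φ : ℝ) (hΦ : Φ ∈ Set.Ioo 0 Real.pi) {t : ℝ} (ht : 0 < t) :
    Real.arccos ((Real.cosh (_root_.arcosh (Real.cosh t * Real.cosh t + Real.sinh t * Real.sinh t * Real.cos Φ)) * Real.cosh t - Real.cosh t) /
      (Real.sinh (_root_.arcosh (Real.cosh t * Real.cosh t + Real.sinh t * Real.sinh t * Real.cos Φ)) * Real.sinh t)) =
    Real.arccos (Real.cosh t /
      Real.sqrt (Real.cosh t ^ 2 + (1 - Real.cos Φ) / (1 + Real.cos Φ))) := by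
  set c := Real.cos Φ with hc
  have hc1 : -1 < c := by
    have h := Real.strictAntiOn_cos ⟨hΦ.1.le, hΦ.2.le⟩
      ⟨Real.pi_pos.le, le_refl _⟩ hΦ.2
    rwa [Real.cos_pi] at h
  have hc2 : c < 1 := by
    have h := Real.strictAntiOn_cos ⟨le_refl (0:ℝ), Real.pi_pos.le⟩
      ⟨hΦ.1.le, hΦ.2.le⟩ hΦ.1
    rwa [Real.cos_zero] at h
  have h1c : 0 < 1 + c := by linarith
  set k := (1 - c) / (1 + c) with hk
  have hk0 : 0 < k := div_pos (by linarith) h1c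
  have hsh : 0 < Real.sinh t := Real.sinh_pos_iff.mpr ht
  have hch : 0 < Real.cosh t := Real.cosh_pos t
  have hsq : Real.cosh t ^ 2 = Real.sinh t ^ 2 + 1 := Real.cosh_sq t
  set X := Real.cosh t * Real.cosh t + Real.sinh t * Real.sinh t * c with hX
  have hX1 : 1 ≤ X := by nlinarith
  rw [_root_.cosh_arcosh_s10 hX1, _root_.sinh_arcosh_s10 hX1]
  congr 1
  have hch2 : Real.cosh t * Real.cosh t = Real.sinh t * Real.sinh t + 1 := by
    nlinarith [hsq]
  have hfac : X ^ 2 - 1 = (Real.sinh t * (1 + c)) ^ 2 * (Real.cosh t ^ 2 + k) := by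
    rw [hX, hk, hsq, hch2]
    field_simp
    ring
  have hck : 0 < Real.cosh t ^ 2 + k := by positivity
  have hsqrt : Real.sqrt (X ^ 2 - 1)
      = Real.sinh t * (1 + c) * Real.sqrt (Real.cosh t ^ 2 + k) := by
    rw [hfac, Real.sqrt_mul (sq_nonneg _), Real.sqrt_sq (by positivity)]
  have hnum : X * Real.cosh t - Real.cosh t
      = (Real.sinh t ^ 2 * (1 + c)) * Real.cosh t := by nlinarith [hsq]
  rw [hsqrt, hnum]
  have hden : Real.sinh t * (1 + c) * Real.sqrt (Real.cosh t ^ 2 + k) * Real.sinh t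
      = (Real.sinh t ^ 2 * (1 + c)) * Real.sqrt (Real.cosh t ^ 2 + k) := by ring
  rw [hden, mul_div_mul_left _ _ (by positivity)]

/-- For a fixed weight `Φ ∈ (0, π)`, the function `t ↦ θ(t, t)` (the hyperbolic inner
angle at equal radii) is continuously differentiable and strictly decreasing on `(0, ∞)`. -/
theorem hyperbolic_angle_diag_C1_strictAnti (Φ : ℝ) (hΦ : Φ ∈ Set.Ioo 0 Real.pi) :
    ContDiffOn ℝ 1 (fun t => thetaH Φ t t) (Set.Ioi 0) ∧
    StrictAntiOn (fun t => thetaH Φ t t) (Set.Ioi 0) := by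
  have hc1 : -1 < Real.cos Φ := by
    have h := Real.strictAntiOn_cos ⟨hΦ.1.le, hΦ.2.le⟩
      ⟨Real.pi_pos.le, le_refl _⟩ hΦ.2
    rwa [Real.cos_pi] at h
  have hc2 : Real.cos Φ < 1 := by
    have h := Real.strictAntiOn_cos ⟨le_refl (0:ℝ), Real.pi_pos.le⟩
      ⟨hΦ.1.le, hΦ.2.le⟩ hΦ.1
    rwa [Real.cos_zero] at h
  set k : ℝ := (1 - Real.cos Φ) / (1 + Real.cos Φ) with hk
  have hk0 : 0 < k := div_pos (by linarith) (by linarith)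
  set g : ℝ → ℝ := fun t => Real.cosh t / Real.sqrt (Real.cosh t ^ 2 + k) with hg
  have hEq : ∀ t ∈ Set.Ioi (0:ℝ), thetaH Φ t t = Real.arccos (g t) := by
    intro t ht
    have := theta_diag_eq Φ hΦ ht
    simpa [thetaH, hypLen, hg, hk] using this
  have hck : ∀ t : ℝ, 0 < Real.cosh t ^ 2 + k := fun t => by positivity
  have hsq : ∀ t : ℝ, 0 < Real.sqrt (Real.cosh t ^ 2 + k) :=
    fun t => Real.sqrt_pos.mpr (hck t)
  have hg0 : ∀ t : ℝ, 0 < g t := fun t => div_pos (Real.cosh_pos t) (hsq t)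
  have hg1 : ∀ t : ℝ, g t < 1 := by
    intro t
    rw [hg, div_lt_one (hsq t)]
    have h1 : Real.cosh t = Real.sqrt (Real.cosh t ^ 2) :=
      (Real.sqrt_sq (Real.cosh_pos t).le).symm
    conv_lhs => rw [h1]
    exact Real.sqrt_lt_sqrt (sq_nonneg _) (by linarith [hk0])
  have hmono : ∀ a ∈ Set.Ioi (0:ℝ), ∀ b ∈ Set.Ioi (0:ℝ), a < b → g a < g b := by
    intro a ha b hb hab
    have hcab : Real.cosh a < Real.cosh b := by
      rw [Real.cosh_lt_cosh, abs_of_pos ha, abs_of_pos hb]; exact hab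
    rw [hg]
    rw [div_lt_div_iff₀ (hsq a) (hsq b)]
    have hca := (Real.cosh_pos a).le
    have hcb := (Real.cosh_pos b).le
    calc Real.cosh a * Real.sqrt (Real.cosh b ^ 2 + k)
        = Real.sqrt (Real.cosh a ^ 2 * (Real.cosh b ^ 2 + k)) := by
          rw [Real.sqrt_mul (sq_nonneg _), Real.sqrt_sq hca]
      _ < Real.sqrt (Real.cosh b ^ 2 * (Real.cosh a ^ 2 + k)) := by
          apply Real.sqrt_lt_sqrt (by positivity)
          nlinarith [hk0, mul_pos (sub_pos.mpr hcab)
            (add_pos (Real.cosh_pos a) (Real.cosh_pos b))]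
      _ = Real.cosh b * Real.sqrt (Real.cosh a ^ 2 + k) := by
          rw [Real.sqrt_mul (sq_nonneg _), Real.sqrt_sq hcb]
  have hgc : ∀ t : ℝ, ContDiffAt ℝ 1 g t := by
    intro t
    apply ContDiffAt.div Real.contDiff_cosh.contDiffAt
    · exact (Real.contDiffAt_sqrt (hck t).ne').comp t
        ((Real.contDiff_cosh.pow 2).add contDiff_const).contDiffAt
    · exact (hsq t).ne'
  constructor
  · have hCD : ContDiffOn ℝ 1 (fun t => Real.arccos (g t)) (Set.Ioi 0) := by
      intro t ht
      exact ((Real.contDiffAt_arccos (by linarith [hg0 t]) (hg1 t).ne).comp t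
        (hgc t)).contDiffWithinAt
    exact hCD.congr hEq
  · intro a ha b hb hab
    simp only
    rw [hEq a ha, hEq b hb]
    exact Real.strictAntiOn_arccos ⟨by linarith [hg0 a], (hg1 a).le⟩
      ⟨by linarith [hg0 b], (hg1 b).le⟩ (hmono a ha b hb hab)
end

section
/- Fix Φ ∈ (0, π) and let θ(x, y) = arccos((x + y cos Φ)/√(x² + y² + 2 x y cos Φ)) for x, y > 0 be the Euclidean inner angle. If 0 < x ≤ y, then θ(x, y) ≥ θ(x, x) and θ(x, y) ≥ θ(y, y); if x ≥ y > 0, then θ(x, y) ≤ θ(x, x) and θ(x, y) ≤ θ(y, y). (Comparison principle for the Euclidean inner angle.) -/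
/-- arccos is antitone. -/
lemma arccos_antitone {a b : ℝ} (h : a ≤ b) : Real.arccos b ≤ Real.arccos a := by
  have := Real.monotone_arcsin h
  simp only [Real.arccos]
  linarith

/-- On the diagonal the Euclidean inner angle equals `Φ / 2`. -/
lemma thetaE_diag (Φ : ℝ) (hΦ : Φ ∈ Set.Ioo 0 Real.pi) {x : ℝ} (hx : 0 < x) :
    thetaE Φ x x = Φ / 2 := by
  obtain ⟨h0, hπ⟩ := hΦ
  have hπpos := Real.pi_pos
  have hc1 : -1 < Real.cos Φ := by
    have := Real.cos_lt_cos_of_nonneg_of_le_pi h0.le le_rfl hπ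
    rwa [Real.cos_pi] at this
  set c := Real.cos Φ with hc
  have hs : Real.cos (Φ / 2) = Real.sqrt ((1 + c) / 2) :=
    Real.cos_half (by linarith) hπ.le
  set s := Real.sqrt ((1 + c) / 2) with hsdef
  have hs2 : s ^ 2 = (1 + c) / 2 := Real.sq_sqrt (by linarith)
  have hs0 : 0 < s := Real.sqrt_pos.mpr (by linarith)
  have hD : x ^ 2 + x ^ 2 + 2 * x * x * c = (2 * x * s) ^ 2 := by
    have : (2 * x * s) ^ 2 = 4 * x ^ 2 * s ^ 2 := by ring
    rw [this, hs2]; ring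
  have hsqrt : Real.sqrt (x ^ 2 + x ^ 2 + 2 * x * x * c) = 2 * x * s := by
    rw [hD, Real.sqrt_sq (by positivity)]
  have hfrac : (x + x * c) / (2 * x * s) = s := by
    rw [div_eq_iff (by positivity)]
    have : s * (2 * x * s) = 2 * x * s ^ 2 := by ring
    rw [this, hs2]; ring
  unfold thetaE
  rw [hsqrt, hfrac, ← hs, Real.arccos_cos (by linarith) (by linarith)]

/-- If `0 < y ≤ x` then the Euclidean inner angle at `x` is at most `Φ / 2`. -/
lemma thetaE_le_half (Φ : ℝ) (hΦ : Φ ∈ Set.Ioo 0 Real.pi) {x y : ℝ} (hy : 0 < y)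
    (hyx : y ≤ x) : thetaE Φ x y ≤ Φ / 2 := by
  obtain ⟨h0, hπ⟩ := hΦ
  have hx : 0 < x := lt_of_lt_of_le hy hyx
  have hc1 : -1 < Real.cos Φ := by
    have := Real.cos_lt_cos_of_nonneg_of_le_pi h0.le le_rfl hπ
    rwa [Real.cos_pi] at this
  have hc2 : Real.cos Φ ≤ 1 := Real.cos_le_one Φ
  set c := Real.cos Φ with hc
  have hs : Real.cos (Φ / 2) = Real.sqrt ((1 + c) / 2) :=
    Real.cos_half (by linarith [Real.pi_pos]) hπ.le
  set s := Real.cos (Φ / 2) with hsdef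
  have hs2 : s ^ 2 = (1 + c) / 2 := by rw [hs]; exact Real.sq_sqrt (by linarith)
  have hs0 : 0 < s := by rw [hs]; exact Real.sqrt_pos.mpr (by linarith)
  have hDpos : 0 < x ^ 2 + y ^ 2 + 2 * x * y * c := by
    nlinarith [sq_nonneg (x - y), mul_pos hx hy]
  set t := Real.sqrt (x ^ 2 + y ^ 2 + 2 * x * y * c) with htdef
  have ht2 : t ^ 2 = x ^ 2 + y ^ 2 + 2 * x * y * c := Real.sq_sqrt hDpos.le
  have ht0 : 0 < t := Real.sqrt_pos.mpr hDpos
  -- key inequality : s * t ≤ x + y * c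
  have hpos : 0 < x + y + 2 * y * c := by nlinarith
  have h1 : (s * t) ^ 2 ≤ (x + y * c) ^ 2 := by
    have hprod : 0 ≤ (x - y) * (x + y + 2 * y * c) :=
      mul_nonneg (by linarith) hpos.le
    nlinarith [hs2, ht2, mul_nonneg hprod (by linarith : (0:ℝ) ≤ 1 - c)]
  have hnum : 0 < x + y * c := by nlinarith
  have key : s * t ≤ x + y * c := by
    nlinarith [h1, hnum, mul_pos hs0 ht0]
  have hu : s ≤ (x + y * c) / t := by
    rw [le_div_iff₀ ht0]; exact key
  have := arccos_antitone hu
  unfold thetaE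
  rw [← htdef]
  calc Real.arccos ((x + y * c) / t) ≤ Real.arccos s := this
    _ = Φ / 2 := by rw [hsdef]; exact Real.arccos_cos (by linarith [Real.pi_pos]) (by linarith)

/-- If `0 < x ≤ y` then the Euclidean inner angle at `x` is at least `Φ / 2`. -/
lemma half_le_thetaE (Φ : ℝ) (hΦ : Φ ∈ Set.Ioo 0 Real.pi) {x y : ℝ} (hx : 0 < x)
    (hxy : x ≤ y) : Φ / 2 ≤ thetaE Φ x y := by
  obtain ⟨h0, hπ⟩ := hΦ
  have hy : 0 < y := lt_of_lt_of_le hx hxy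
  have hc1 : -1 < Real.cos Φ := by
    have := Real.cos_lt_cos_of_nonneg_of_le_pi h0.le le_rfl hπ
    rwa [Real.cos_pi] at this
  have hc2 : Real.cos Φ ≤ 1 := Real.cos_le_one Φ
  set c := Real.cos Φ with hc
  have hs : Real.cos (Φ / 2) = Real.sqrt ((1 + c) / 2) :=
    Real.cos_half (by linarith [Real.pi_pos]) hπ.le
  set s := Real.cos (Φ / 2) with hsdef
  have hs2 : s ^ 2 = (1 + c) / 2 := by rw [hs]; exact Real.sq_sqrt (by linarith)
  have hs0 : 0 < s := by rw [hs]; exact Real.sqrt_pos.mpr (by linarith)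
  have hDpos : 0 < x ^ 2 + y ^ 2 + 2 * x * y * c := by
    nlinarith [sq_nonneg (x - y), mul_pos hx hy]
  set t := Real.sqrt (x ^ 2 + y ^ 2 + 2 * x * y * c) with htdef
  have ht2 : t ^ 2 = x ^ 2 + y ^ 2 + 2 * x * y * c := Real.sq_sqrt hDpos.le
  have ht0 : 0 < t := Real.sqrt_pos.mpr hDpos
  -- key inequality : x + y * c ≤ s * t
  have key : x + y * c ≤ s * t := by
    rcases le_or_gt (x + y * c) 0 with hcase | hcase
    · exact hcase.trans (mul_pos hs0 ht0).le
    · have hpos : 0 < x + y + 2 * y * c := by nlinarith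
      have h1 : (x + y * c) ^ 2 ≤ (s * t) ^ 2 := by
        have hprod : 0 ≤ (y - x) * (x + y + 2 * y * c) :=
          mul_nonneg (by linarith) hpos.le
        nlinarith [hs2, ht2, mul_nonneg hprod (by linarith : (0:ℝ) ≤ 1 - c)]
      nlinarith [h1, hcase, mul_pos hs0 ht0]
  have hu : (x + y * c) / t ≤ s := by
    rw [div_le_iff₀ ht0]; exact key
  have := arccos_antitone hu
  unfold thetaE
  rw [← htdef]
  calc Φ / 2 = Real.arccos s := by
        rw [hsdef]; exact (Real.arccos_cos (by linarith [Real.pi_pos]) (by linarith)).symm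
    _ ≤ Real.arccos ((x + y * c) / t) := this

/-- Comparison principle for the Euclidean inner angle: for `Φ ∈ (0, π)`, if `0 < x ≤ y`
then `θ(x, y) ≥ θ(x, x)` and `θ(x, y) ≥ θ(y, y)`; if `x ≥ y > 0` then `θ(x, y) ≤ θ(x, x)`
and `θ(x, y) ≤ θ(y, y)`. -/
theorem euclidean_angle_comparison (Φ : ℝ) (hΦ : Φ ∈ Set.Ioo 0 Real.pi) (x y : ℝ) :
    (0 < x → x ≤ y → thetaE Φ x x ≤ thetaE Φ x y ∧ thetaE Φ y y ≤ thetaE Φ x y) ∧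
    (0 < y → y ≤ x → thetaE Φ x y ≤ thetaE Φ x x ∧ thetaE Φ x y ≤ thetaE Φ y y) := by
  constructor
  · intro hx hxy
    have hy : 0 < y := lt_of_lt_of_le hx hxy
    rw [thetaE_diag Φ hΦ hx, thetaE_diag Φ hΦ hy]
    exact ⟨half_le_thetaE Φ hΦ hx hxy, half_le_thetaE Φ hΦ hx hxy⟩
  · intro hy hyx
    have hx : 0 < x := lt_of_lt_of_le hy hyx
    rw [thetaE_diag Φ hΦ hx, thetaE_diag Φ hΦ hy]
    exact ⟨thetaE_le_half Φ hΦ hy hyx, thetaE_le_half Φ hΦ hy hyx⟩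
end

section
/- Let f : [0, +∞) → ℝ be a locally Lipschitz function and let C ∈ ℝ. Suppose that for almost every t ∈ [0, +∞) with f(t) > C, the derivative f′(t) exists and f′(t) ≤ 0. Then f(t) ≤ max{f(0), C} for all t ∈ [0, +∞). -/
open MeasureTheory

open Set Filter Topology

lemma lipschitz_decrease_on {f : ℝ → ℝ} {K : NNReal} {a b : ℝ} (hab : a < b)
    (hK : LipschitzOnWith K f (Set.Icc a b))
    (hd : ∀ᵐ x ∂volume, x ∈ Set.Ioo a b → DifferentiableAt ℝ f x ∧ deriv f x ≤ 0) :
    f b ≤ f a := by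
  set c : ℝ → ℝ := fun x => max a (min x b) with hc
  have hcmem : ∀ x, c x ∈ Set.Icc a b := fun x =>
    ⟨le_max_left _ _, max_le hab.le (min_le_right _ _)⟩
  have hcmono : Monotone c := fun x y hxy => by
    dsimp [c]; exact max_le_max le_rfl (min_le_min hxy le_rfl)
  have hca : c a = a := by simp [c, min_eq_left hab.le]
  have hcb : c b = b := by simp [c, hab.le]
  have hcid : ∀ x ∈ Set.Ioo a b, c x = x := fun x hx => by
    simp [c, min_eq_left hx.2.le, max_eq_right hx.1.le]
  set g : ℝ → ℝ := fun x => (K : ℝ) * c x - f (c x) with hgdef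
  have hg : Monotone g := by
    intro x y hxy
    have h2 : |f (c y) - f (c x)| ≤ (K : ℝ) * |c y - c x| := by
      have h1 := hK.dist_le_mul (c y) (hcmem y) (c x) (hcmem x)
      rwa [Real.dist_eq, Real.dist_eq] at h1
    have h3 : c x ≤ c y := hcmono hxy
    have h4 : f (c y) - f (c x) ≤ |f (c y) - f (c x)| := le_abs_self _
    have h5 : |c y - c x| = c y - c x := abs_of_nonneg (sub_nonneg.2 h3)
    rw [h5] at h2
    dsimp [g]; linarith
  have hccont : Continuous c := continuous_const.max (continuous_id.min continuous_const)
  have hgcont : Continuous g := by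
    have : Continuous fun x => f (c x) := hK.continuousOn.comp_continuous hccont hcmem
    exact (continuous_const.mul hccont).sub this
  have hst : ∀ x, hg.stieltjesFunction x = g x := by
    intro x
    rw [hg.stieltjesFunction_eq]
    exact rightLim_eq_of_tendsto (h := nhdsGT_neBot x)
      ((hgcont.tendsto x).mono_left nhdsWithin_le_nhds)
  have hstf : ⇑hg.stieltjesFunction = g := funext hst
  -- finiteness of the Stieltjes measure
  have hbot : Tendsto (⇑hg.stieltjesFunction) atBot (𝓝 (g a)) := by
    rw [hstf]
    apply Tendsto.congr' _ tendsto_const_nhds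
    filter_upwards [eventually_le_atBot a] with x hx
    have : c x = a := by
      have : min x b = x := min_eq_left (hx.trans hab.le)
      simp [c, this, max_eq_left hx]
    simp [g, this, hca]
  have htop : Tendsto (⇑hg.stieltjesFunction) atTop (𝓝 (g b)) := by
    rw [hstf]
    apply Tendsto.congr' _ tendsto_const_nhds
    filter_upwards [eventually_ge_atTop b] with x hx
    have : c x = b := by
      have h1 : min x b = b := min_eq_right hx
      simp [c, h1, max_eq_right hab.le]
    simp [g, this, hcb]
  haveI : IsFiniteMeasure hg.stieltjesFunction.measure :=
    hg.stieltjesFunction.isFiniteMeasure hbot htop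
  set μ := hg.stieltjesFunction.measure with hμ
  have hae : ∀ᵐ x ∂volume, HasDerivAt g ((μ.rnDeriv volume x).toReal) x := hg.ae_hasDerivAt
  -- a.e. lower bound on the derivative on `Ioo a b`
  have key : ∀ᵐ x ∂volume, x ∈ Set.Ioo a b → (K : ℝ) ≤ (μ.rnDeriv volume x).toReal := by
    filter_upwards [hae, hd] with x hx hdx hmem
    obtain ⟨hdiff, hle⟩ := hdx hmem
    have hev : (fun y => (K : ℝ) * y - f y) =ᶠ[𝓝 x] g := by
      filter_upwards [isOpen_Ioo.mem_nhds hmem] with y hy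
      simp [g, hcid y hy]
    have h2 : HasDerivAt (fun y => (K : ℝ) * y - f y) ((K : ℝ) - deriv f x) x := by
      have h := ((hasDerivAt_id' x).const_mul (K : ℝ)).sub hdiff.hasDerivAt
      rwa [mul_one] at h
    have h3 : HasDerivAt g ((K : ℝ) - deriv f x) x := h2.congr_of_eventuallyEq hev.symm
    have h4 : (μ.rnDeriv volume x).toReal = (K : ℝ) - deriv f x := hx.unique h3
    rw [h4]; linarith
  have hint : Integrable (fun x => (μ.rnDeriv volume x).toReal) volume :=
    Measure.integrable_toReal_rnDeriv
  have hKle : (K : ℝ) * (b - a) ≤ ∫ x in Set.Ioc a b, (μ.rnDeriv volume x).toReal ∂volume := by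
    have h1 : ∫ x in Set.Ioc a b, (K : ℝ) ∂volume = (K : ℝ) * (b - a) := by
      simp [Real.volume_Ioc, ENNReal.toReal_ofReal (by linarith : (0:ℝ) ≤ b - a), mul_comm]
      rw [max_eq_left (by linarith : (0:ℝ) ≤ b - a)]; ring
    rw [← h1]
    refine setIntegral_mono_ae_restrict (integrableOn_const ?_) hint.integrableOn ?_
    · rw [Real.volume_Ioc]; exact ENNReal.ofReal_ne_top
    · rw [EventuallyLE, ae_restrict_iff' measurableSet_Ioc]
      have hb0 : ∀ᵐ (x : ℝ) ∂volume, x ≠ b := by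
        refine (ae_iff.2 ?_)
        simpa using Real.volume_singleton
      filter_upwards [key, hb0] with x hx hxb hxmem
      exact hx ⟨hxmem.1, lt_of_le_of_ne hxmem.2 hxb⟩
  have hub : ∫ x in Set.Ioc a b, (μ.rnDeriv volume x).toReal ∂volume ≤ (μ (Set.Ioc a b)).toReal :=
    Measure.setIntegral_toReal_rnDeriv_le (measure_ne_top μ _)
  have hμIoc : (μ (Set.Ioc a b)).toReal = g b - g a := by
    rw [hμ, hg.stieltjesFunction.measure_Ioc, hst, hst]
    exact ENNReal.toReal_ofReal (sub_nonneg.2 (hg hab.le))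
  have hga : g a = (K : ℝ) * a - f a := by simp [g, hca]
  have hgb : g b = (K : ℝ) * b - f b := by simp [g, hcb]
  rw [hμIoc, hga, hgb] at hub
  nlinarith [hKle, hub]

/-- Calculus lemma (Ge–Hua): if `f : [0, ∞) → ℝ` is locally Lipschitz and `f′(t) ≤ 0` for
almost every `t` in the upper level set `{f > C}`, then `f(t) ≤ max {f(0), C}` for all
`t ≥ 0`. -/
theorem upper_level_decrease (f : ℝ → ℝ) (C : ℝ)
    (hlip : ∀ t ∈ Set.Ici (0 : ℝ), ∃ K : NNReal, ∃ s ∈ nhdsWithin t (Set.Ici (0 : ℝ)),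
      LipschitzOnWith K f s)
    (hderiv : ∀ᵐ t ∂(volume.restrict (Set.Ici (0 : ℝ))),
      C < f t → DifferentiableAt ℝ f t ∧ deriv f t ≤ 0) :
    ∀ t ∈ Set.Ici (0 : ℝ), f t ≤ max (f 0) C := by
  have hcont : ContinuousOn f (Set.Ici 0) := by
    intro t ht
    obtain ⟨K, s, hs, hK⟩ := hlip t ht
    exact (hK.continuousOn.continuousWithinAt (mem_of_mem_nhdsWithin ht hs)).mono_of_mem_nhdsWithin hs
  intro t0 ht0
  rw [Set.mem_Ici] at ht0
  by_contra hcon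
  push_neg at hcon
  set M := max (f 0) C with hM
  have hf0 : f 0 ≤ M := le_max_left _ _
  have hCM : C ≤ M := le_max_right _ _
  have ht0pos : 0 < t0 := by
    rcases eq_or_lt_of_le ht0 with h | h
    · exact absurd hcon (by rw [← h]; exact not_lt.2 hf0)
    · exact h
  set A := Set.Icc 0 t0 ∩ f ⁻¹' (Set.Iic M) with hA
  have hA0 : (0:ℝ) ∈ A := ⟨⟨le_rfl, ht0⟩, hf0⟩
  have hAclosed : IsClosed A :=
    (hcont.mono Set.Icc_subset_Ici_self).preimage_isClosed_of_isClosed isClosed_Icc isClosed_Iic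
  have hAbdd : BddAbove A := ⟨t0, fun x hx => hx.1.2⟩
  set a := sSup A with ha
  have haA : a ∈ A := hAclosed.csSup_mem ⟨0, hA0⟩ hAbdd
  have ha0 : 0 ≤ a := haA.1.1
  have hat0 : a ≤ t0 := haA.1.2
  have hfa : f a ≤ M := haA.2
  have halt : a < t0 := lt_of_le_of_ne hat0 fun h => absurd hcon (not_lt.2 (h ▸ hfa))
  have hgtM : ∀ s, a < s → s ≤ t0 → M < f s := by
    intro s hs1 hs2
    by_contra h
    push_neg at h
    exact absurd (le_csSup hAbdd ⟨⟨ha0.trans hs1.le, hs2⟩, h⟩) (not_le.2 hs1)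
  have hdec : ∀ a' ∈ Set.Ioo a t0, f t0 ≤ f a' := by
    intro a' ha'
    have h0a' : 0 < a' := lt_of_le_of_lt ha0 ha'.1
    set S := {x : ℝ | f x ≤ f a'} with hS
    have hsub : Set.Icc a' t0 ⊆ S := by
      apply IsClosed.Icc_subset_of_forall_exists_gt
      · have hIci : Set.Icc a' t0 ⊆ Set.Ici 0 := fun z hz => le_trans h0a'.le hz.1
        have h : IsClosed (Set.Icc a' t0 ∩ f ⁻¹' Set.Iic (f a')) :=
          (hcont.mono hIci).preimage_isClosed_of_isClosed isClosed_Icc isClosed_Iic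
        rw [Set.inter_comm] at h
        exact h
      · exact Set.mem_setOf.2 le_rfl
      · rintro x ⟨hxS, hxI⟩ y hy
        rw [Set.mem_Ioi] at hy
        have hx0 : 0 < x := lt_of_lt_of_le h0a' hxI.1
        obtain ⟨K, u, hu, hK⟩ := hlip x (Set.mem_Ici.2 hx0.le)
        have hu' : u ∈ 𝓝 x := by
          rwa [nhdsWithin_eq_nhds.2 (Ici_mem_nhds hx0)] at hu
        obtain ⟨ε, hε, hball⟩ := Metric.mem_nhds_iff.1 hu'
        set δ := min (ε/2) (min (y - x) (t0 - x)) with hδ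
        have hδpos : 0 < δ :=
          lt_min (half_pos hε) (lt_min (sub_pos.2 hy) (sub_pos.2 hxI.2))
        set b' := x + δ with hb'
        have hbb : x < b' := by simp [hb']; linarith
        have hba : Set.Icc x b' ⊆ u := by
          intro z hz
          apply hball
          rw [Metric.mem_ball, Real.dist_eq, abs_of_nonneg (sub_nonneg.2 hz.1)]
          have h1 : z ≤ x + δ := hz.2
          have h2 : δ ≤ ε/2 := min_le_left _ _
          linarith
        have hb't0 : b' ≤ t0 := by
          have : δ ≤ t0 - x := (min_le_right _ _).trans (min_le_right _ _)
          simp [hb']; linarith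
        have hb'y : b' ≤ y := by
          have : δ ≤ y - x := (min_le_right _ _).trans (min_le_left _ _)
          simp [hb']; linarith
        have hdle : f b' ≤ f x := by
          apply lipschitz_decrease_on hbb (hK.mono hba)
          have hae' := (ae_restrict_iff' measurableSet_Ici).1 hderiv
          filter_upwards [hae'] with w hw hmem
          have hw0 : w ∈ Set.Ici (0:ℝ) := Set.mem_Ici.2 (hx0.le.trans hmem.1.le)
          have hwa : a < w := lt_of_lt_of_le ha'.1 (hxI.1.trans hmem.1.le)
          have hwt0 : w ≤ t0 := hmem.2.le.trans hb't0
          exact hw hw0 (lt_of_le_of_lt hCM (hgtM w hwa hwt0))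
        exact ⟨b', hdle.trans hxS, hbb, hb'y⟩
    exact hsub ⟨ha'.2.le, le_rfl⟩
  -- pass to the limit a' → a⁺
  have hIoo : Set.Ioo a t0 ⊆ Set.Ici 0 := fun z hz => ha0.trans hz.1.le
  have htend : Tendsto f (𝓝[Set.Ioo a t0] a) (𝓝 (f a)) :=
    (hcont a (Set.mem_Ici.2 ha0)).tendsto.mono_left (nhdsWithin_mono a hIoo)
  haveI : (𝓝[Set.Ioo a t0] a).NeBot := left_nhdsWithin_Ioo_neBot halt
  have hft0 : f t0 ≤ f a := by
    apply ge_of_tendsto htend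
    filter_upwards [self_mem_nhdsWithin] with z hz
    exact hdec z hz
  exact absurd hcon (not_lt.2 (hft0.trans hfa))
end

section
/- Let f : [0, +∞) → ℝ be a locally Lipschitz function and let C ∈ ℝ. Suppose that for almost every t ∈ [0, +∞) with f(t) < C, the derivative f′(t) exists and f′(t) ≥ 0. Then f(t) ≥ min{f(0), C} for all t ∈ [0, +∞). -/
open MeasureTheory

open Set

lemma lip_mono_ae {f : ℝ → ℝ} {K : NNReal} {a b : ℝ} (hab : a ≤ b)
    (hK : LipschitzOnWith K f (Set.Icc a b))
    (hae : ∀ᵐ t ∂(volume.restrict (Set.Icc a b)),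
      DifferentiableAt ℝ f t ∧ 0 ≤ deriv f t) :
    f a ≤ f b := by
  have hE : volume ({t | ¬ (DifferentiableAt ℝ f t ∧ 0 ≤ deriv f t)} ∩ Icc a b) = 0 := by
    have h := ae_iff.mp hae
    rwa [Measure.restrict_apply' measurableSet_Icc] at h
  have key : ∀ ε : ℝ, 0 < ε → f a ≤ f b + ε * (b - a + (K : ℝ) + 1) := by
    intro ε hε
    obtain ⟨U, hEU, hUopen, hUvol⟩ := Set.exists_isOpen_lt_of_lt _ (ENNReal.ofReal ε)
      (by rw [hE]; exact ENNReal.ofReal_pos.2 hε)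
    have hUfin : ∀ t : ℝ, volume (U ∩ Set.Ioc a t) ≠ ⊤ :=
      fun t => ((measure_mono Set.inter_subset_left).trans_lt
        (hUvol.trans_le le_top)).ne
    set m : ℝ → ℝ := fun t => (volume (U ∩ Set.Ioc a t)).toReal with hm
    have mmono : ∀ {s t : ℝ}, s ≤ t → m s ≤ m t := by
      intro s t hst
      exact ENNReal.toReal_le_toReal (hUfin s) (hUfin t) |>.mpr
        (measure_mono (Set.inter_subset_inter_right _ (Set.Ioc_subset_Ioc_right hst)))
    have mlip : ∀ s t : ℝ, s ≤ t → m t ≤ m s + (t - s) := by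
      intro s t hst
      have h1 : volume (U ∩ Set.Ioc a t) ≤ volume (U ∩ Set.Ioc a s) + volume (Set.Ioc s t) := by
        refine le_trans (measure_mono ?_) (measure_union_le _ _)
        intro x ⟨hxU, hx1, hx2⟩
        by_cases hxs : x ≤ s
        · exact Or.inl ⟨hxU, hx1, hxs⟩
        · exact Or.inr ⟨lt_of_not_ge hxs, hx2⟩
      have h2 := ENNReal.toReal_le_toReal (hUfin t)
        (by
          refine ENNReal.add_ne_top.2 ⟨hUfin s, ?_⟩
          simp [Real.volume_Ioc]) |>.mpr h1
      rw [ENNReal.toReal_add (hUfin s) (by simp [Real.volume_Ioc]), Real.volume_Ioc,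
        ENNReal.toReal_ofReal (by linarith)] at h2
      exact h2
    have mfull : ∀ s t : ℝ, a ≤ s → s ≤ t → Set.Ioc s t ⊆ U → m s + (t - s) ≤ m t := by
      intro s t has hst hsub
      have hdisj : Disjoint (U ∩ Set.Ioc a s) (Set.Ioc s t) := by
        rw [Set.disjoint_left]
        rintro x ⟨-, -, hx2⟩ ⟨hx3, -⟩
        exact absurd hx2 (not_le_of_gt hx3)
      have h1 : volume (U ∩ Set.Ioc a s) + volume (Set.Ioc s t)
          ≤ volume (U ∩ Set.Ioc a t) := by
        rw [← measure_union hdisj measurableSet_Ioc]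
        refine measure_mono ?_
        rintro x (⟨hxU, hx1, hx2⟩ | ⟨hx1, hx2⟩)
        · exact ⟨hxU, hx1, hx2.trans hst⟩
        · exact ⟨hsub ⟨hx1, hx2⟩, has.trans_lt hx1, hx2⟩
      have h2 := ENNReal.toReal_le_toReal
        (by
          refine ENNReal.add_ne_top.2 ⟨hUfin s, ?_⟩
          simp [Real.volume_Ioc]) (hUfin t) |>.mpr h1
      rw [ENNReal.toReal_add (hUfin s) (by simp [Real.volume_Ioc]), Real.volume_Ioc,
        ENNReal.toReal_ofReal (by linarith)] at h2
      exact h2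
    set g : ℝ → ℝ := fun t => f t - f a + ε * (t - a) + ((K : ℝ) + 1) * m t with hg
    have mcont : ContinuousOn m (Set.Icc a b) := by
      refine LipschitzOnWith.continuousOn (K := 1) ?_
      refine LipschitzOnWith.of_dist_le_mul (fun x hx y hy => ?_)
      rw [Real.dist_eq, Real.dist_eq, NNReal.coe_one, one_mul]
      rcases le_total x y with h | h
      · rw [abs_of_nonpos (by linarith [mmono h]), abs_of_nonpos (by linarith)]
        have := mlip x y h; linarith
      · rw [abs_of_nonneg (by linarith [mmono h]), abs_of_nonneg (by linarith)]
        have := mlip y x h; linarith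
    have gcont : ContinuousOn g (Set.Icc a b) := by
      refine ContinuousOn.add (ContinuousOn.add ?_ ?_) ?_
      · exact hK.continuousOn.sub continuousOn_const
      · exact (continuousOn_const.mul ((continuousOn_id.sub continuousOn_const)))
      · exact continuousOn_const.mul mcont
    have ma : m a = 0 := by simp [hm]
    have main : Set.Icc a b ⊆ {t | 0 ≤ g t} := by
      have hclosed : IsClosed ({t | 0 ≤ g t} ∩ Set.Icc a b) := by
        rw [Set.inter_comm]
        exact gcont.preimage_isClosed_of_isClosed isClosed_Icc isClosed_Ici
      refine hclosed.Icc_subset_of_forall_exists_gt ?_ ?_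
      · show (0 : ℝ) ≤ g a
        simp [hg, ma]
      · rintro x ⟨hgx, hxa, hxb⟩ y hy
        by_cases hxU : x ∈ U
        · -- inside the open cover: measure term grows at full speed
          obtain ⟨δ, hδ, hball⟩ := Metric.isOpen_iff.1 hUopen x hxU
          set z := min y (min b (x + δ/2)) with hz
          have hxz : x < z := by
            simp only [hz, lt_min_iff]
            exact ⟨hy, hxb, by linarith⟩
          have hzb : z ≤ b := (min_le_right _ _).trans (min_le_left _ _)
          have hzd : z ≤ x + δ/2 := (min_le_right _ _).trans (min_le_right _ _)
          refine ⟨z, ?_, hxz, min_le_left _ _⟩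
          have hsub : Set.Ioc x z ⊆ U := by
            intro u ⟨hu1, hu2⟩
            apply hball
            rw [Metric.mem_ball, Real.dist_eq, abs_of_pos (by linarith)]
            linarith
          have hmz := mfull x z hxa hxz.le hsub
          have hlipb : f x - f z ≤ (K : ℝ) * (z - x) := by
            have h := hK.dist_le_mul x ⟨hxa, hxb.le⟩ z ⟨hxa.trans hxz.le, hzb⟩
            rw [Real.dist_eq, Real.dist_eq] at h
            have habs : |x - z| = z - x := by
              rw [abs_of_nonpos (by linarith)]; ring
            rw [habs] at h
            have := le_abs_self (f x - f z)
            linarith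
          show (0 : ℝ) ≤ g z
          simp only [hg, Set.mem_setOf_eq] at hgx ⊢
          nlinarith [hxz.le, K.coe_nonneg]
        · -- outside: the derivative is ≥ 0
          have hPx : DifferentiableAt ℝ f x ∧ 0 ≤ deriv f x := by
            by_contra hP
            exact hxU (hEU ⟨hP, hxa, hxb.le⟩)
          have hd : HasDerivWithinAt f (deriv f x) (Set.Ioi x) x :=
            (hPx.1.hasDerivAt).hasDerivWithinAt
          rw [hasDerivWithinAt_iff_tendsto_slope] at hd
          have hslope : ∀ᶠ u in nhdsWithin x (Set.Ioi x \ {x}), -ε < slope f x u :=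
            hd.eventually (eventually_gt_nhds (by linarith [hPx.2]))
          have hdiff : Set.Ioi x \ {x} = Set.Ioi x :=
            Set.diff_singleton_eq_self (by simp)
          rw [hdiff] at hslope
          have hIoc : Set.Ioc x y ∈ nhdsWithin x (Set.Ioi x) :=
            Ioc_mem_nhdsGT_of_mem ⟨le_refl x, hy⟩
          obtain ⟨z, hz1, hz2⟩ := (hslope.and (Filter.eventually_of_mem hIoc (fun u hu => hu))).exists
          refine ⟨z, ?_, hz2⟩
          have hxz : x < z := hz2.1
          have hfz : f x - f z ≤ ε * (z - x) := by
            rw [slope_def_field] at hz1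
            have h3 : -ε * (z - x) < f z - f x :=
              (lt_div_iff₀ (by linarith : (0:ℝ) < z - x)).1 hz1
            nlinarith
          show (0 : ℝ) ≤ g z
          simp only [hg, Set.mem_setOf_eq] at hgx ⊢
          have hmz := mmono hxz.le
          nlinarith [K.coe_nonneg]
    have hb := main ⟨hab, le_refl b⟩
    have hmb : m b ≤ ε :=
      ENNReal.toReal_le_of_le_ofReal hε.le
        ((measure_mono Set.inter_subset_left).trans hUvol.le)
    simp only [Set.mem_setOf_eq, hg] at hb
    nlinarith [K.coe_nonneg]
  refine le_of_forall_pos_le_add (fun ε' hε' => ?_)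
  have hD : (0:ℝ) < b - a + (K : ℝ) + 1 := by
    have := K.coe_nonneg; linarith
  have := key (ε' / (b - a + (K : ℝ) + 1)) (div_pos hε' hD)
  rwa [div_mul_cancel₀ _ hD.ne'] at this

lemma core_level {f : ℝ → ℝ} {K : NNReal} {a b C : ℝ} (hab : a ≤ b)
    (hK : LipschitzOnWith K f (Set.Icc a b))
    (hae : ∀ᵐ t ∂(volume.restrict (Set.Icc a b)),
      f t < C → DifferentiableAt ℝ f t ∧ 0 ≤ deriv f t) :
    ∀ t ∈ Set.Icc a b, min (f a) C ≤ f t := by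
  by_contra hcon
  push_neg at hcon
  obtain ⟨t₁, ht₁, hft₁⟩ := hcon
  set M := min (f a) C with hM
  set A := {s : ℝ | s ∈ Set.Icc a t₁ ∧ M ≤ f s} with hA
  have hAne : A.Nonempty := ⟨a, ⟨le_refl a, ht₁.1⟩, min_le_left _ _⟩
  have hAbdd : BddAbove A := ⟨t₁, fun s hs => hs.1.2⟩
  have hAclosed : IsClosed A := by
    have : A = Set.Icc a t₁ ∩ f ⁻¹' (Set.Ici M) := by
      ext s; simp [hA, Set.mem_Icc, and_comm]
    rw [this]
    exact (hK.continuousOn.mono (Set.Icc_subset_Icc_right ht₁.2)).preimage_isClosed_of_isClosed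
      isClosed_Icc isClosed_Ici
  set c := sSup A with hc
  have hcA : c ∈ A := hAclosed.csSup_mem hAne hAbdd
  have hct₁ : c ≤ t₁ := hcA.1.2
  have hac : a ≤ c := hcA.1.1
  have hfc : M ≤ f c := hcA.2
  have hclt : c < t₁ := lt_of_le_of_ne hct₁ (by
    intro h; rw [h] at hfc; exact absurd hfc (not_le.2 hft₁))
  have hless : ∀ s ∈ Set.Ioc c t₁, f s < C := by
    intro s ⟨hs1, hs2⟩
    by_contra hge
    push_neg at hge
    by_cases hMs : M ≤ f s
    · exact absurd (le_csSup hAbdd ⟨⟨hac.trans hs1.le, hs2⟩, hMs⟩) (not_le.2 hs1)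
    · push_neg at hMs
      exact absurd (min_le_right (f a) C |>.trans hge) (not_le.2 hMs)
  have hmono : f c ≤ f t₁ := by
    refine lip_mono_ae hclt.le (hK.mono (Set.Icc_subset_Icc hac (ht₁.2))) ?_
    have h1 : ∀ᵐ t ∂(volume.restrict (Set.Icc c t₁)),
        f t < C → DifferentiableAt ℝ f t ∧ 0 ≤ deriv f t :=
      ae_restrict_of_ae_restrict_of_subset (Set.Icc_subset_Icc hac ht₁.2) hae
    have h2 : ∀ᵐ t ∂(volume.restrict (Set.Icc c t₁)), t ≠ c :=
      ae_restrict_of_ae (by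
        have : volume ({c} : Set ℝ) = 0 := Real.volume_singleton
        exact measure_mono_null (fun x hx => by simpa using hx) this)
    filter_upwards [h1, h2, ae_restrict_mem measurableSet_Icc] with t h1t h2t h3t
    exact h1t (hless t ⟨lt_of_le_of_ne h3t.1 (Ne.symm h2t), h3t.2⟩)
  exact absurd (hfc.trans hmono) (not_le.2 hft₁)

/-- Calculus lemma (Ge–Hua): if `f : [0, ∞) → ℝ` is locally Lipschitz and `f′(t) ≥ 0` for
almost every `t` in the lower level set `{f < C}`, then `f(t) ≥ min {f(0), C}` for all
`t ≥ 0`. -/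
theorem lower_level_increase (f : ℝ → ℝ) (C : ℝ)
    (hlip : ∀ t ∈ Set.Ici (0 : ℝ), ∃ K : NNReal, ∃ s ∈ nhdsWithin t (Set.Ici (0 : ℝ)),
      LipschitzOnWith K f s)
    (hderiv : ∀ᵐ t ∂(volume.restrict (Set.Ici (0 : ℝ))),
      f t < C → DifferentiableAt ℝ f t ∧ 0 ≤ deriv f t) :
    ∀ t ∈ Set.Ici (0 : ℝ), min (f 0) C ≤ f t := by
  
  have hcont : ∀ t ∈ Set.Ici (0 : ℝ), ContinuousWithinAt f (Set.Ici (0:ℝ)) t := by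
    intro t ht
    obtain ⟨K, s, hs, hl⟩ := hlip t ht
    have hts : t ∈ s := mem_of_mem_nhdsWithin ht hs
    exact (hl.continuousOn t hts).mono_left (nhdsWithin_le_of_mem hs)
  intro T hT
  set M := min (f 0) C with hM
  suffices h : Set.Icc (0:ℝ) T ⊆ {t | M ≤ f t} by
    exact h ⟨hT, le_refl T⟩
  have hclosed : IsClosed ({t | M ≤ f t} ∩ Set.Icc (0:ℝ) T) := by
    rw [Set.inter_comm]
    have hcT : ContinuousOn f (Set.Icc (0:ℝ) T) := fun x hx =>
      (hcont x hx.1).mono (fun u hu => hu.1)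
    exact hcT.preimage_isClosed_of_isClosed isClosed_Icc isClosed_Ici
  refine hclosed.Icc_subset_of_forall_exists_gt (show M ≤ f 0 from min_le_left (f 0) C) ?_
  rintro x ⟨hMx, hx0, hxT⟩ y hy
  obtain ⟨K, s, hs, hl⟩ := hlip x hx0
  obtain ⟨V, hVopen, hxV, hVs⟩ := mem_nhdsWithin.1 hs
  obtain ⟨δ, hδ, hball⟩ := Metric.isOpen_iff.1 hVopen x hxV
  set z := min y (x + δ/2) with hz
  have hxz : x < z := by
    simp only [hz, lt_min_iff]
    exact ⟨hy, by linarith⟩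
  have hzd : z ≤ x + δ/2 := min_le_right _ _
  have hsub : Set.Icc x z ⊆ s := by
    intro u ⟨hu1, hu2⟩
    refine hVs ⟨hball ?_, hx0.trans hu1⟩
    rw [Metric.mem_ball, Real.dist_eq, abs_of_nonneg (by linarith)]
    linarith
  have hKz : LipschitzOnWith K f (Set.Icc x z) := hl.mono hsub
  have haez : ∀ᵐ t ∂(volume.restrict (Set.Icc x z)),
      f t < C → DifferentiableAt ℝ f t ∧ 0 ≤ deriv f t :=
    ae_restrict_of_ae_restrict_of_subset
      (fun u hu => hx0.trans hu.1) hderiv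
  have hcore := core_level hxz.le hKz haez z ⟨hxz.le, le_refl z⟩
  refine ⟨z, ?_, hxz, min_le_left _ _⟩
  show M ≤ f z
  calc M = min M C := by rw [hM, min_assoc, min_self]
    _ ≤ min (f x) C := min_le_min hMx (le_refl C)
    _ ≤ f z := hcore
end

section
/- Let C₀ > 0 and let g : [0, +∞) → (0, +∞) be a locally Lipschitz function such that for almost every t ∈ [0, +∞) the derivative g′(t) exists and satisfies g′(t) ≤ −C₀ · sinh(g(t)). Then tanh(g(t)/2) ≤ tanh(g(0)/2) · e^{−C₀ t} for all t ≥ 0; in particular g(t) → 0 exponentially fast as t → +∞. -/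
open MeasureTheory Set Filter
open scoped Topology

/-! ### Auxiliary lemmas -/

section Aux

/-- tanh is monotone. -/
private lemma tanh_mono : Monotone Real.tanh := by
  have heq : Real.tanh = fun x => Real.sinh x / Real.cosh x :=
    funext fun x => Real.tanh_eq_sinh_div_cosh x
  rw [heq]
  have h : ∀ x : ℝ, HasDerivAt (fun x => Real.sinh x / Real.cosh x)
      ((Real.cosh x * Real.cosh x - Real.sinh x * Real.sinh x) / Real.cosh x ^ 2) x := fun x =>
    (Real.hasDerivAt_sinh x).div (Real.hasDerivAt_cosh x) (Real.cosh_pos x).ne'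
  refine (strictMono_of_deriv_pos fun x => ?_).monotone
  rw [(h x).deriv]
  have h1 : Real.cosh x * Real.cosh x - Real.sinh x * Real.sinh x = 1 := by
    have := Real.cosh_sq_sub_sinh_sq x; nlinarith
  rw [h1]
  positivity

private lemma tanh_pos {x : ℝ} (hx : 0 < x) : 0 < Real.tanh x := by
  rw [Real.tanh_eq_sinh_div_cosh]
  exact div_pos (by rwa [Real.sinh_pos_iff]) (Real.cosh_pos x)

/-- The function `ψ(y) = log (tanh (y/2)) = log (sinh (y/2)) - log (cosh (y/2))`. -/
noncomputable def psiAux (y : ℝ) : ℝ :=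
  Real.log (Real.sinh (y / 2)) - Real.log (Real.cosh (y / 2))

private lemma exp_psiAux {y : ℝ} (hy : 0 < y) : Real.exp (psiAux y) = Real.tanh (y / 2) := by
  have hs : 0 < Real.sinh (y / 2) := by rw [Real.sinh_pos_iff]; linarith
  rw [psiAux, Real.exp_sub, Real.exp_log hs, Real.exp_log (Real.cosh_pos _),
    Real.tanh_eq_sinh_div_cosh]

private lemma psiAux_hasDerivAt {y : ℝ} (hy : 0 < y) :
    HasDerivAt psiAux (1 / Real.sinh y) y := by
  have hs : 0 < Real.sinh (y / 2) := by rw [Real.sinh_pos_iff]; linarith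
  have hc : 0 < Real.cosh (y / 2) := Real.cosh_pos _
  have hhalf : HasDerivAt (fun y : ℝ => y / 2) (1 / 2) y := by
    simpa using (hasDerivAt_id y).div_const 2
  have h1 : HasDerivAt (fun y : ℝ => Real.log (Real.sinh (y / 2)))
      ((Real.sinh (y / 2))⁻¹ * (Real.cosh (y / 2) * (1 / 2))) y :=
    by have := (Real.hasDerivAt_log hs.ne').comp y ((Real.hasDerivAt_sinh (y / 2)).comp y hhalf); exact this
  have h2 : HasDerivAt (fun y : ℝ => Real.log (Real.cosh (y / 2)))
      ((Real.cosh (y / 2))⁻¹ * (Real.sinh (y / 2) * (1 / 2))) y :=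
    by have := (Real.hasDerivAt_log hc.ne').comp y ((Real.hasDerivAt_cosh (y / 2)).comp y hhalf); exact this
  have h3 := h1.sub h2
  convert h3 using 1
  · rfl
  · rfl
  · rfl
  have hsy := Real.sinh_two_mul (y / 2)
  rw [show 2 * (y / 2) = y by ring] at hsy
  have hid : Real.cosh (y / 2) ^ 2 - Real.sinh (y / 2) ^ 2 = 1 :=
    Real.cosh_sq_sub_sinh_sq (y / 2)
  set sh := Real.sinh (y / 2) with hsh
  set ch := Real.cosh (y / 2) with hch
  rw [hsy, show sh⁻¹ * (ch * (1 / 2)) - ch⁻¹ * (sh * (1 / 2))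
      = (ch ^ 2 - sh ^ 2) / (2 * sh * ch) from by
    field_simp, hid]

private lemma psiAux_lipschitzOnWith {m : ℝ} (hm : 0 < m) :
    LipschitzOnWith (Real.toNNReal (1 / Real.sinh m)) psiAux (Set.Ici m) := by
  have hsm : 0 < Real.sinh m := by rwa [Real.sinh_pos_iff]
  refine Convex.lipschitzOnWith_of_nnnorm_hasDerivWithin_le (f' := fun y => 1 / Real.sinh y)
    (convex_Ici m) (fun y hy => (psiAux_hasDerivAt (lt_of_lt_of_le hm hy)).hasDerivWithinAt)
    fun y hy => ?_
  have hsy : 0 < Real.sinh y := by rw [Real.sinh_pos_iff]; exact lt_of_lt_of_le hm hy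
  rw [← NNReal.coe_le_coe, coe_nnnorm, Real.coe_toNNReal _ (by positivity),
    Real.norm_eq_abs, abs_of_pos (by positivity)]
  exact one_div_le_one_div_of_le hsm (Real.sinh_le_sinh.2 hy)

private lemma lipschitzOnWith_add {f g : ℝ → ℝ} {Kf Kg : NNReal} {s : Set ℝ}
    (hf : LipschitzOnWith Kf f s) (hg : LipschitzOnWith Kg g s) :
    LipschitzOnWith (Kf + Kg) (fun x => f x + g x) s := by
  refine LipschitzOnWith.of_dist_le_mul fun x hx y hy => ?_
  have h1 := hf.dist_le_mul x hx y hy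
  have h2 := hg.dist_le_mul x hx y hy
  simp only [Real.dist_eq, NNReal.coe_add] at *
  calc |f x + g x - (f y + g y)| ≤ |f x - f y| + |g x - g y| := by
        have := abs_add_le (f x - f y) (g x - g y); rw [show f x + g x - (f y + g y) = f x - f y + (g x - g y) by ring]; exact this
    _ ≤ Kf * |x - y| + Kg * |x - y| := add_le_add h1 h2
    _ = (Kf + Kg) * |x - y| := by ring

/-- Key FTC-type lemma: a globally Lipschitz function whose derivative is a.e. nonpositive
on `(a, b]` satisfies `f b ≤ f a`. -/
private lemma le_of_lipschitzWith_ae {f : ℝ → ℝ} {K : NNReal} (hf : LipschitzWith K f)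
    {a b : ℝ} (hab : a ≤ b)
    (hder : ∀ᵐ x ∂(volume.restrict (Set.Ioc a b)),
      DifferentiableAt ℝ f x ∧ deriv f x ≤ 0) : f b ≤ f a := by
  have hcont : Continuous f := hf.continuous
  set h : ℕ → ℝ := fun n => 1 / (n + 1) with hh_def
  have hhpos : ∀ n, 0 < h n := fun n => by positivity
  have hht : Tendsto h atTop (𝓝 0) := tendsto_one_div_add_atTop_nhds_zero_nat
  -- the sequence `c + h n` tends to `c` within `{c}ᶜ`
  have hseq : ∀ c : ℝ, Tendsto (fun n => c + h n) atTop (𝓝[≠] c) := by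
    intro c
    refine tendsto_nhdsWithin_iff.2 ⟨by simpa using tendsto_const_nhds.add hht, ?_⟩
    exact Eventually.of_forall fun n => (ne_of_gt (lt_add_of_pos_right c (hhpos n)))
  -- key limit: averages of `f` near `c` converge to `f c`
  have keylim : ∀ c : ℝ, Tendsto (fun n => (∫ x in c..(c + h n), f x) / h n) atTop (𝓝 (f c)) := by
    intro c
    have hF : HasDerivAt (fun u => ∫ x in c..u, f x) (f c) c :=
      intervalIntegral.integral_hasDerivAt_right (hcont.intervalIntegrable c c)
        ⟨Set.univ, Filter.univ_mem, hcont.aestronglyMeasurable.restrict⟩ hcont.continuousAt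
    rw [hasDerivAt_iff_tendsto_slope] at hF
    have := hF.comp (hseq c)
    refine this.congr fun n => ?_
    simp only [Function.comp_apply, slope_def_field, intervalIntegral.integral_same]
    rw [sub_zero, add_sub_cancel_left]
  -- difference quotients
  set q : ℕ → ℝ → ℝ := fun n x => (f (x + h n) - f x) / h n with hq_def
  have hqcont : ∀ n, Continuous (q n) :=
    fun n => ((hcont.comp (continuous_id.add continuous_const)).sub hcont).div_const _
  -- the integral of the difference quotient
  have intq : ∀ n, ∫ x in a..b, q n x
      = ((∫ x in b..(b + h n), f x) - ∫ x in a..(a + h n), f x) / h n := by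
    intro n
    have hint : ∀ u v : ℝ, IntervalIntegrable f volume u v := fun u v =>
      hcont.intervalIntegrable u v
    have hint2 : IntervalIntegrable (fun x => f (x + h n)) volume a b :=
      (hcont.comp (continuous_id.add continuous_const)).intervalIntegrable a b
    have e1 : ∫ x in a..b, q n x
        = ((∫ x in a..b, f (x + h n)) - ∫ x in a..b, f x) / h n := by
      simp only [hq_def]
      rw [intervalIntegral.integral_div, intervalIntegral.integral_sub hint2 (hint a b)]
    have e2 : (∫ x in a..b, f (x + h n)) = ∫ x in (a + h n)..(b + h n), f x :=
      intervalIntegral.integral_comp_add_right f (h n)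
    have e3 := intervalIntegral.integral_add_adjacent_intervals (hint a (a + h n))
      (hint (a + h n) (b + h n))
    have e4 := intervalIntegral.integral_add_adjacent_intervals (hint a b)
      (hint b (b + h n))
    rw [e1, e2]
    rw [show (∫ x in (a + h n)..(b + h n), f x)
        = (∫ x in a..(b + h n), f x) - ∫ x in a..(a + h n), f x by linarith,
      show (∫ x in a..b, f x) = (∫ x in a..(b + h n), f x) - ∫ x in b..(b + h n), f x by linarith]
    ring
  -- dominated convergence
  haveI : IsFiniteMeasure (volume.restrict (Set.Ioc a b)) := by
    constructor
    rw [Measure.restrict_apply_univ, Real.volume_Ioc]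
    exact ENNReal.ofReal_lt_top
  have hDCT : Tendsto (fun n => ∫ x in Set.Ioc a b, q n x) atTop
      (𝓝 (∫ x in Set.Ioc a b, deriv f x)) := by
    refine tendsto_integral_of_dominated_convergence (fun _ => (K : ℝ))
      (fun n => (hqcont n).aestronglyMeasurable) (integrable_const _)
      (fun n => Eventually.of_forall fun x => ?_) ?_
    · -- bound
      have hd : dist (f (x + h n)) (f x) ≤ K * dist (x + h n) x := hf.dist_le_mul _ _
      rw [Real.dist_eq, Real.dist_eq, add_sub_cancel_left, abs_of_pos (hhpos n)] at hd
      rw [Real.norm_eq_abs, hq_def]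
      rw [abs_div, abs_of_pos (hhpos n)]
      rw [div_le_iff₀ (hhpos n)]
      simpa [Real.dist_eq] using hd
    · -- a.e. convergence
      filter_upwards [hder] with x hx
      have hd := hx.1.hasDerivAt
      rw [hasDerivAt_iff_tendsto_slope] at hd
      have := hd.comp (hseq x)
      refine this.congr fun n => ?_
      simp only [Function.comp_apply, slope_def_field, hq_def, add_sub_cancel_left]
  -- combine
  have heq : ∀ n, ∫ x in Set.Ioc a b, q n x = ∫ x in a..b, q n x := fun n =>
    (intervalIntegral.integral_of_le hab).symm
  have hlim2 : Tendsto (fun n => ∫ x in Set.Ioc a b, q n x) atTop (𝓝 (f b - f a)) := by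
    have := (keylim b).sub (keylim a)
    refine this.congr fun n => ?_
    rw [heq n, intq n, sub_div]
  have hval : f b - f a = ∫ x in Set.Ioc a b, deriv f x := tendsto_nhds_unique hlim2 hDCT
  have hnonpos : (∫ x in Set.Ioc a b, deriv f x) ≤ 0 :=
    integral_nonpos_of_ae (hder.mono fun x hx => hx.2)
  linarith [hval ▸ hnonpos]

/-- Local version: Lipschitz on `[a, b+ε]` with a.e. nonpositive derivative on `(a,b]`. -/
private lemma le_of_lipschitzOnWith_ae {f : ℝ → ℝ} {K : NNReal} {a b ε : ℝ}
    (hab : a ≤ b) (hε : 0 < ε) (hl : LipschitzOnWith K f (Set.Icc a (b + ε)))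
    (hder : ∀ᵐ x ∂(volume.restrict (Set.Ioc a b)),
      DifferentiableAt ℝ f x ∧ deriv f x ≤ 0) : f b ≤ f a := by
  obtain ⟨F, hF, hFe⟩ := hl.extend_real
  have hmem_a : a ∈ Set.Icc a (b + ε) := ⟨le_rfl, by linarith⟩
  have hmem_b : b ∈ Set.Icc a (b + ε) := ⟨hab, by linarith⟩
  have hIoo : ∀ᵐ x ∂(volume.restrict (Set.Ioc a b)), x ∈ Set.Ioo a b := by
    have h1 : ∀ᵐ x ∂(volume.restrict (Set.Ioc a b)), x ≠ b := by
      refine ae_restrict_of_ae ?_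
      rw [ae_iff]
      simpa using measure_singleton (α := ℝ) b
    filter_upwards [h1, ae_restrict_mem measurableSet_Ioc] with x hx1 hx2
    exact ⟨hx2.1, lt_of_le_of_ne hx2.2 hx1⟩
  have h1 : ∀ᵐ x ∂(volume.restrict (Set.Ioc a b)),
      DifferentiableAt ℝ F x ∧ deriv F x ≤ 0 := by
    filter_upwards [hder, hIoo] with x hx hx2
    have hev : f =ᶠ[𝓝 x] F := by
      have hmem : Set.Ioo a (b + ε) ∈ 𝓝 x :=
        isOpen_Ioo.mem_nhds ⟨hx2.1, by have := hx2.2; linarith⟩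
      filter_upwards [hmem] with y hy
      exact hFe ⟨hy.1.le, hy.2.le⟩
    constructor
    · exact hx.1.congr_of_eventuallyEq hev.symm
    · rw [hev.symm.deriv_eq]; exact hx.2
  have := le_of_lipschitzWith_ae hF hab h1
  rwa [← hFe hmem_a, ← hFe hmem_b] at this

/-- Gluing local decrease into global decrease on `[0, ∞)`. -/
private lemma decrease_glue {F : ℝ → ℝ} (hc : ContinuousOn F (Set.Ici 0))
    (hloc : ∀ t ∈ Set.Ici (0 : ℝ), ∃ δ > 0, ∀ u ∈ Set.Icc t (t + δ), F u ≤ F t) :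
    ∀ a b : ℝ, 0 ≤ a → a ≤ b → F b ≤ F a := by
  intro a b ha hab
  have key : Set.Icc a b ⊆ {u | F u ≤ F a} := by
    apply IsClosed.Icc_subset_of_forall_exists_gt
    · have heq : {u | F u ≤ F a} ∩ Set.Icc a b = Set.Icc a b ∩ F ⁻¹' (Set.Iic (F a)) := by
        ext x; constructor <;> rintro ⟨h1, h2⟩ <;> exact ⟨h2, h1⟩
      rw [heq]
      exact (hc.mono fun x hx => le_trans ha hx.1).preimage_isClosed_of_isClosed
        isClosed_Icc isClosed_Iic
    · exact (le_refl (F a) : a ∈ {u | F u ≤ F a})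
    · rintro x ⟨hx1, hx2⟩ y (hy : x < y)
      obtain ⟨δ, hδ, hd⟩ := hloc x (le_trans ha hx2.1)
      refine ⟨min (x + δ) y, ?_, lt_min (by linarith) hy, min_le_right _ _⟩
      exact le_trans (hd _ ⟨le_min (by linarith) hy.le, min_le_left _ _⟩) hx1
  exact key ⟨hab, le_rfl⟩

end Aux

/-- If `g : [0, ∞) → (0, ∞)` is locally Lipschitz and satisfies `g′(t) ≤ −C₀ sinh(g(t))`
almost everywhere, then `tanh(g(t)/2) ≤ tanh(g(0)/2) e^{−C₀ t}` for all `t ≥ 0`; in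
particular `g(t) → 0` exponentially fast as `t → +∞`. -/
theorem exp_decay_of_sinh_decrease (C₀ : ℝ) (hC₀ : 0 < C₀) (g : ℝ → ℝ)
    (hpos : ∀ t ∈ Set.Ici (0 : ℝ), 0 < g t)
    (hlip : ∀ t ∈ Set.Ici (0 : ℝ), ∃ K : NNReal, ∃ s ∈ nhdsWithin t (Set.Ici (0 : ℝ)),
      LipschitzOnWith K g s)
    (hderiv : ∀ᵐ t ∂(volume.restrict (Set.Ici (0 : ℝ))),
      DifferentiableAt ℝ g t ∧ deriv g t ≤ -C₀ * Real.sinh (g t)) :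
    (∀ t ∈ Set.Ici (0 : ℝ),
      Real.tanh (g t / 2) ≤ Real.tanh (g 0 / 2) * Real.exp (-C₀ * t)) ∧
    Filter.Tendsto g Filter.atTop (nhds 0) := by
  -- the function G = ψ(g t) + C₀ t
  set G : ℝ → ℝ := fun x => psiAux (g x) + C₀ * x with hG_def
  -- continuity of g on Ici 0
  have hgc : ContinuousOn g (Set.Ici 0) := by
    intro t ht
    obtain ⟨K, s, hs, hK⟩ := hlip t ht
    have hts : t ∈ s := mem_of_mem_nhdsWithin ht hs
    exact (hK.continuousOn t hts).mono_left (nhdsWithin_le_of_mem hs)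
  -- continuity of psiAux at positive points
  have hpsic : ∀ y : ℝ, 0 < y → ContinuousAt psiAux y := fun y hy =>
    (psiAux_hasDerivAt hy).differentiableAt.continuousAt
  -- continuity of G
  have hGc : ContinuousOn G (Set.Ici 0) := by
    intro t ht
    refine ContinuousWithinAt.add ?_ ((continuous_const.mul continuous_id).continuousWithinAt)
    exact (hpsic (g t) (hpos t ht)).comp_continuousWithinAt (hgc t ht)
  -- local decrease of G
  have hloc : ∀ t ∈ Set.Ici (0 : ℝ), ∃ δ > 0, ∀ u ∈ Set.Icc t (t + δ), G u ≤ G t := by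
    intro t ht
    obtain ⟨K, s, hs, hK⟩ := hlip t ht
    obtain ⟨δ, hδ, hball⟩ := Metric.mem_nhdsWithin_iff.1 hs
    set δ' := δ / 2 with hδ'_def
    have hδ' : 0 < δ' := by positivity
    have hsub : Set.Icc t (t + δ') ⊆ s := by
      intro u hu
      refine hball ⟨?_, le_trans ht hu.1⟩
      rw [Metric.mem_ball, Real.dist_eq, abs_of_nonneg (by linarith [hu.1])]
      linarith [hu.2]
    have hK' : LipschitzOnWith K g (Set.Icc t (t + δ')) := hK.mono hsub
    -- minimum of g on the compact interval
    obtain ⟨x₀, hx₀s, hx₀min⟩ := isCompact_Icc.exists_isMinOn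
      ⟨t, le_rfl, by linarith⟩ hK'.continuousOn
    have hm : 0 < g x₀ := hpos x₀ (le_trans ht hx₀s.1)
    -- G is Lipschitz on Icc t (t + δ')
    have hψg : LipschitzOnWith (Real.toNNReal (1 / Real.sinh (g x₀)) * K)
        (psiAux ∘ g) (Set.Icc t (t + δ')) :=
      (psiAux_lipschitzOnWith hm).comp hK' fun x hx => hx₀min hx
    have hlin : LipschitzOnWith (Real.toNNReal C₀) (fun x => C₀ * x) (Set.Icc t (t + δ')) := by
      refine LipschitzOnWith.of_dist_le_mul fun x _ y _ => ?_
      rw [Real.dist_eq, Real.dist_eq, Real.coe_toNNReal _ hC₀.le,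
        show C₀ * x - C₀ * y = C₀ * (x - y) by ring, abs_mul, abs_of_pos hC₀]
    have hGlip : LipschitzOnWith (Real.toNNReal (1 / Real.sinh (g x₀)) * K + Real.toNNReal C₀)
        G (Set.Icc t (t + δ')) := lipschitzOnWith_add hψg hlin
    refine ⟨δ' / 2, by positivity, fun u hu => ?_⟩
    -- apply the local FTC lemma on [t, u] with slack δ'/2
    refine le_of_lipschitzOnWith_ae (ε := δ' / 2) hu.1 (by positivity)
      (hGlip.mono fun x hx => ⟨hx.1, by linarith [hx.2, hu.2]⟩) ?_
    -- a.e. derivative bound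
    have hae : ∀ᵐ x ∂(volume.restrict (Set.Ioc t u)),
        DifferentiableAt ℝ g x ∧ deriv g x ≤ -C₀ * Real.sinh (g x) :=
      ae_restrict_of_ae_restrict_of_subset (fun x hx => le_trans ht hx.1.le) hderiv
    filter_upwards [hae, ae_restrict_mem measurableSet_Ioc] with x hx hxm
    have hgx : 0 < g x := hpos x (le_trans ht hxm.1.le)
    have hsinh : 0 < Real.sinh (g x) := by rwa [Real.sinh_pos_iff]
    have hψ : HasDerivAt (psiAux ∘ g) (1 / Real.sinh (g x) * deriv g x) x :=
      (psiAux_hasDerivAt hgx).comp x hx.1.hasDerivAt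
    have hlin' : HasDerivAt (fun x : ℝ => C₀ * x) (C₀ * 1) x :=
      (hasDerivAt_id x).const_mul C₀
    have hGd : HasDerivAt G (1 / Real.sinh (g x) * deriv g x + C₀ * 1) x := hψ.add hlin'
    refine ⟨hGd.differentiableAt, ?_⟩
    rw [hGd.deriv]
    have h1 : 1 / Real.sinh (g x) * deriv g x
        ≤ 1 / Real.sinh (g x) * (-C₀ * Real.sinh (g x)) :=
      mul_le_mul_of_nonneg_left hx.2 (by positivity)
    have h2 : 1 / Real.sinh (g x) * (-C₀ * Real.sinh (g x)) = -C₀ := by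
      field_simp
    linarith
  -- global decrease of G
  have hmono := decrease_glue hGc hloc
  -- the main estimate
  have hmain : ∀ t ∈ Set.Ici (0 : ℝ),
      Real.tanh (g t / 2) ≤ Real.tanh (g 0 / 2) * Real.exp (-C₀ * t) := by
    intro t ht
    have hGt := hmono 0 t le_rfl ht
    simp only [hG_def, mul_zero, add_zero] at hGt
    have h0 : 0 < g 0 := hpos 0 Set.self_mem_Ici
    have ht' : 0 < g t := hpos t ht
    calc Real.tanh (g t / 2) = Real.exp (psiAux (g t)) := (exp_psiAux ht').symm
      _ ≤ Real.exp (psiAux (g 0) + -C₀ * t) := Real.exp_le_exp.2 (by linarith)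
      _ = Real.tanh (g 0 / 2) * Real.exp (-C₀ * t) := by
          rw [Real.exp_add, exp_psiAux h0]
  refine ⟨hmain, ?_⟩
  -- exponential decay implies g → 0
  refine Metric.tendsto_nhds.2 fun ε hε => ?_
  have htanh : 0 < Real.tanh (ε / 2) := tanh_pos (by positivity)
  set A := Real.tanh (g 0 / 2) with hA_def
  have h1 : Tendsto (fun t : ℝ => A * Real.exp (-C₀ * t)) atTop (𝓝 0) := by
    have h2 : Tendsto (fun t : ℝ => C₀ * t) atTop atTop :=
      Tendsto.const_mul_atTop hC₀ tendsto_id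
    have h3 : Tendsto (fun t : ℝ => Real.exp (-(C₀ * t))) atTop (𝓝 0) :=
      Real.tendsto_exp_neg_atTop_nhds_zero.comp h2
    have h4 := h3.const_mul A
    simpa [neg_mul] using h4
  have h2 : ∀ᶠ t in atTop, A * Real.exp (-C₀ * t) < Real.tanh (ε / 2) :=
    h1.eventually_lt_const htanh
  filter_upwards [h2, eventually_ge_atTop (0 : ℝ)] with t h2t h0t
  have hb := hmain t h0t
  have hgt : 0 < g t := hpos t h0t
  rw [Real.dist_0_eq_abs, abs_of_pos hgt]
  by_contra hcon
  push_neg at hcon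
  have : Real.tanh (ε / 2) ≤ Real.tanh (g t / 2) := tanh_mono (by linarith)
  linarith
end
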